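/- arXiv:2301.00423 — 5 statements merged into one kernel-verified Lean document; each statement's English description precedes it below -/
import Mathlib

section
/- Let f_1,…,f_N : ℝ^n → ℝ be convex functions, let 1 ≤ T ≤ N, and define H(x) = (sum of the T largest values among f_1(x),…,f_N(x)). For x ∈ ℝ^n let 𝓜_H(x) be the family of all subsets I ⊆ {1,…,N} with |I| = T such that Σ_{i∈I} f_i(x) = H(x). Then the convex subdifferential of H at x is given by ∂H(x) = conv( ⋃_{I ∈ 𝓜_H(x)} { Σ_{i∈I} s_i : s_i ∈ ∂f_i(x) for every i ∈ I } ), where conv denotes the convex hull and the inner set is the Minkowski sum of the subdifferentials ∂f_i(x) over i ∈ I. -/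
open scoped RealInnerProductSpace BigOperators
open scoped Pointwise

/-- The `i`-th smallest entry of `z` (0-indexed): `orderStat z i = z_[i+1]`. -/
noncomputable def orderStat {N : ℕ} (z : Fin N → ℝ) (i : Fin N) : ℝ := z (Tuple.sort z i)

/-- The sum of the `T` largest entries of `z`. -/
noncomputable def topSum {N : ℕ} (T : ℕ) (z : Fin N → ℝ) : ℝ :=
  ∑ j ∈ Finset.univ.filter (fun j : Fin N => N - T ≤ (j : ℕ)), orderStat z j

private lemma strictMono_nat_le {T : ℕ} {f : Fin T → ℕ} (hf : StrictMono f) (k : Fin T) :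
    (k : ℕ) ≤ f k := by
  have H : ∀ m : ℕ, ∀ k : Fin T, (k : ℕ) = m → m ≤ f k := by
    intro m
    induction m with
    | zero => intro k _; exact Nat.zero_le _
    | succ m ih =>
      intro k hk
      have hkT := k.isLt
      have hm : m < T := by omega
      have hlt : (⟨m, hm⟩ : Fin T) < k := by
        simp only [Fin.lt_def, Fin.val_mk]; omega
      have := hf hlt
      have := ih ⟨m, hm⟩ rfl
      omega
  exact H (k : ℕ) k rfl

private lemma strictMono_fin_bound {T N : ℕ} {e : Fin T → Fin N} (he : StrictMono e)
    (k : Fin T) : (e k : ℕ) ≤ N - T + k := by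
  have hTN : T ≤ N := by
    have := Fintype.card_le_of_injective e he.injective
    simpa using this
  have h1 : ∀ j : Fin T, (j : ℕ) ≤ N - 1 - (e j.rev : ℕ) := by
    apply strictMono_nat_le (f := fun j : Fin T => N - 1 - (e j.rev : ℕ))
    intro a b hab
    have h2 : e b.rev < e a.rev := he (Fin.rev_lt_rev.mpr hab)
    have h3 := (e a.rev).isLt
    have h4 : (e b.rev : ℕ) < (e a.rev : ℕ) := h2
    show N - 1 - (e a.rev : ℕ) < N - 1 - (e b.rev : ℕ)
    omega
  have h5 := h1 k.rev
  rw [Fin.rev_rev] at h5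
  have h6 : (k.rev : ℕ) = T - ((k : ℕ) + 1) := Fin.val_rev k
  have h7 := k.isLt
  have h8 := (e k).isLt
  omega

private def topT (N T : ℕ) : Finset (Fin N) :=
  Finset.univ.filter (fun j : Fin N => N - T ≤ (j : ℕ))

private lemma card_topT {N T : ℕ} (hTN : T ≤ N) : (topT N T).card = T := by
  have h : (topT N T).card = (Finset.univ : Finset (Fin T)).card := by
    apply Finset.card_bij' (i := fun (j : Fin N) (hj : j ∈ topT N T) =>
      (⟨(j : ℕ) - (N - T), by
        have := j.isLt
        have : N - T ≤ (j : ℕ) := by simpa [topT] using hj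
        omega⟩ : Fin T))
      (j := fun (k : Fin T) (_ : k ∈ Finset.univ) =>
        (⟨N - T + (k : ℕ), by have := k.isLt; omega⟩ : Fin N))
    · intro a ha
      have : N - T ≤ (a : ℕ) := by simpa [topT] using ha
      apply Fin.ext
      simp
      omega
    · intro a _
      apply Fin.ext
      simp
    · intro a _; simp
    · intro a _
      have := a.isLt
      simp only [topT, Finset.mem_filter, Finset.mem_univ, true_and]
      omega
  simpa using h

private lemma exists_topSum {N T : ℕ} (hTN : T ≤ N) (z : Fin N → ℝ) :
    ∃ I : Finset (Fin N), I.card = T ∧ ∑ i ∈ I, z i = topSum T z := by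
  refine ⟨(topT N T).image (Tuple.sort z), ?_, ?_⟩
  · rw [Finset.card_image_of_injective _ (Equiv.injective _), card_topT hTN]
  · rw [Finset.sum_image (fun a _ b _ h => (Equiv.injective _ h))]
    rfl

private lemma sum_le_topSum {N T : ℕ} (hTN : T ≤ N) (z : Fin N → ℝ)
    {I : Finset (Fin N)} (hI : I.card = T) : ∑ i ∈ I, z i ≤ topSum T z := by
  classical
  set σ := Tuple.sort z with hσ
  set w : Fin N → ℝ := z ∘ σ with hw
  have hwmono : Monotone w := Tuple.monotone_sort z
  set J : Finset (Fin N) := I.image σ.symm with hJ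
  have hJcard : J.card = T := by
    rw [hJ, Finset.card_image_of_injective _ (Equiv.injective _), hI]
  have hsum : ∑ i ∈ I, z i = ∑ j ∈ J, w j := by
    rw [hJ, Finset.sum_image (fun a _ b _ h => (Equiv.injective _ h))]
    apply Finset.sum_congr rfl
    intro i _
    simp [hw]
  have htop : topSum T z = ∑ j ∈ topT N T, w j := rfl
  rw [hsum, htop]
  -- now compare via orderEmbOfFin
  have himgJ : Finset.image (fun k => J.orderEmbOfFin hJcard k) Finset.univ = J := by
    apply Finset.coe_injective
    rw [Finset.coe_image, Finset.coe_univ, Set.image_univ]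
    exact J.range_orderEmbOfFin hJcard
  have himgT : Finset.image (fun k => (topT N T).orderEmbOfFin (card_topT hTN) k)
      Finset.univ = topT N T := by
    apply Finset.coe_injective
    rw [Finset.coe_image, Finset.coe_univ, Set.image_univ]
    exact (topT N T).range_orderEmbOfFin (card_topT hTN)
  rw [← himgJ, ← himgT,
    Finset.sum_image (fun a _ b _ h => (J.orderEmbOfFin hJcard).injective h),
    Finset.sum_image (fun a _ b _ h => ((topT N T).orderEmbOfFin (card_topT hTN)).injective h)]
  apply Finset.sum_le_sum
  intro k _
  apply hwmono
  -- (J.orderEmbOfFin k : ℕ) ≤ N - T + k = (topT.orderEmbOfFin k : ℕ)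
  have h1 : ((J.orderEmbOfFin hJcard k : Fin N) : ℕ) ≤ N - T + (k : ℕ) :=
    strictMono_fin_bound (J.orderEmbOfFin hJcard).strictMono k
  have h2 : (fun k : Fin T => (⟨N - T + (k : ℕ), by have := k.isLt; omega⟩ : Fin N)) =
      (topT N T).orderEmbOfFin (card_topT hTN) := by
    apply Finset.orderEmbOfFin_unique
    · intro x
      have := x.isLt
      simp only [topT, Finset.mem_filter, Finset.mem_univ, true_and]
      omega
    · intro a b hab
      simp only [Fin.mk_lt_mk]
      exact Nat.add_lt_add_left hab _
  have h3 : ((topT N T).orderEmbOfFin (card_topT hTN) k : ℕ) = N - T + (k : ℕ) := by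
    rw [← h2]
  rw [Fin.le_def, h3]
  exact h1


/-- The convex subdifferential of `φ : ℝ^n → ℝ` at `x`. -/
def subdiff {n : ℕ} (φ : EuclideanSpace ℝ (Fin n) → ℝ) (x : EuclideanSpace ℝ (Fin n)) :
    Set (EuclideanSpace ℝ (Fin n)) :=
  {s | ∀ y, φ x + ⟪s, y - x⟫ ≤ φ y}

section DirDeriv

variable {n : ℕ}

/-- Difference quotient of `φ` at `x` in direction `d`. -/
noncomputable def Qd (φ : (EuclideanSpace ℝ (Fin n)) → ℝ) (x d : (EuclideanSpace ℝ (Fin n))) (t : ℝ) : ℝ := (φ (x + t • d) - φ x) / t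

/-- Directional derivative (as infimum of difference quotients). -/
noncomputable def pdir (φ : (EuclideanSpace ℝ (Fin n)) → ℝ) (x d : (EuclideanSpace ℝ (Fin n))) : ℝ := sInf (Qd φ x d '' Set.Ioi (0 : ℝ))

variable {φ : (EuclideanSpace ℝ (Fin n)) → ℝ} (hφ : ConvexOn ℝ Set.univ φ) (x d : (EuclideanSpace ℝ (Fin n)))

lemma Qd_mono (hφ : ConvexOn ℝ Set.univ φ) (x d : (EuclideanSpace ℝ (Fin n))) {s t : ℝ} (hs : 0 < s) (hst : s ≤ t) :
    Qd φ x d s ≤ Qd φ x d t := by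
  have ht : 0 < t := lt_of_lt_of_le hs hst
  have ha : 0 ≤ s / t := by positivity
  have hb : 0 ≤ 1 - s / t := by
    have : s / t ≤ 1 := (div_le_one ht).mpr hst
    linarith
  have hat : s / t * t = s := div_mul_cancel₀ s ht.ne'
  have key := hφ.2 (Set.mem_univ x) (Set.mem_univ (x + t • d)) hb ha (by ring)
  have hpt : (1 - s / t) • x + (s / t) • (x + t • d) = x + s • d := by
    rw [smul_add, smul_smul, hat]
    module
  rw [hpt] at key
  simp only [smul_eq_mul] at key
  rw [Qd, Qd, div_le_div_iff₀ hs ht]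
  have key3 : φ (x + s • d) - φ x ≤ s / t * (φ (x + t • d) - φ x) := by
    ring_nf at key ⊢
    linarith [key]
  have key4 := mul_le_mul_of_nonneg_right key3 ht.le
  have h6 : s / t * (φ (x + t • d) - φ x) * t = (φ (x + t • d) - φ x) * s := by
    field_simp
  linarith [key4]

lemma Qd_add_neg_nonneg (hφ : ConvexOn ℝ Set.univ φ) (x d : (EuclideanSpace ℝ (Fin n))) {t : ℝ} (ht : 0 < t) :
    0 ≤ Qd φ x d t + Qd φ x (-d) t := by
  have key := hφ.2 (Set.mem_univ (x + t • d)) (Set.mem_univ (x + t • (-d)))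
    (by norm_num : (0:ℝ) ≤ 1/2) (by norm_num : (0:ℝ) ≤ 1/2) (by norm_num)
  have hpt : (1/2 : ℝ) • (x + t • d) + (1/2 : ℝ) • (x + t • (-d)) = x := by module
  rw [hpt] at key
  simp only [smul_eq_mul] at key
  rw [Qd, Qd, ← add_div]
  apply div_nonneg _ ht.le
  linarith

lemma Qd_bddBelow (hφ : ConvexOn ℝ Set.univ φ) (x d : (EuclideanSpace ℝ (Fin n))) :
    BddBelow (Qd φ x d '' Set.Ioi (0 : ℝ)) := by
  refine ⟨min (Qd φ x d 1) (-(Qd φ x (-d) 1)), ?_⟩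
  rintro y ⟨t, ht, rfl⟩
  simp only [Set.mem_Ioi] at ht
  rcases le_or_gt t 1 with h1 | h1
  · have h2 := Qd_add_neg_nonneg hφ x d ht
    have h3 := Qd_mono hφ x (-d) ht h1
    exact le_trans (min_le_right _ _) (by linarith)
  · exact le_trans (min_le_left _ _) (Qd_mono hφ x d one_pos h1.le)

lemma Qd_nonempty (φ : (EuclideanSpace ℝ (Fin n)) → ℝ) (x d : (EuclideanSpace ℝ (Fin n))) : (Qd φ x d '' Set.Ioi (0 : ℝ)).Nonempty :=
  ⟨Qd φ x d 1, 1, by norm_num, rfl⟩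

lemma pdir_le_Qd (hφ : ConvexOn ℝ Set.univ φ) (x d : (EuclideanSpace ℝ (Fin n))) {t : ℝ} (ht : 0 < t) :
    pdir φ x d ≤ Qd φ x d t :=
  csInf_le (Qd_bddBelow hφ x d) ⟨t, ht, rfl⟩

lemma exists_Qd_small (hφ : ConvexOn ℝ Set.univ φ) (x d : (EuclideanSpace ℝ (Fin n))) {ε : ℝ} (hε : 0 < ε) :
    ∃ t : ℝ, 0 < t ∧ ∀ u : ℝ, 0 < u → u ≤ t → Qd φ x d u ≤ pdir φ x d + ε := by
  have h : pdir φ x d < pdir φ x d + ε := by linarith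
  obtain ⟨y, ⟨t, ht, rfl⟩, hy⟩ := exists_lt_of_csInf_lt (Qd_nonempty φ x d) h
  simp only [Set.mem_Ioi] at ht
  exact ⟨t, ht, fun u hu hut => (Qd_mono hφ x d hu hut).trans hy.le⟩

lemma inner_le_pdir (hφ : ConvexOn ℝ Set.univ φ) {x s : (EuclideanSpace ℝ (Fin n))} (hs : s ∈ subdiff φ x) (d : (EuclideanSpace ℝ (Fin n))) :
    ⟪s, d⟫ ≤ pdir φ x d := by
  apply le_csInf (Qd_nonempty φ x d)
  rintro b ⟨t, ht, rfl⟩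
  simp only [Set.mem_Ioi] at ht
  have h := hs (x + t • d)
  rw [add_sub_cancel_left, real_inner_smul_right] at h
  rw [Qd, le_div_iff₀ ht]
  linarith [mul_comm t ⟪s, d⟫]

lemma pdir_zero (φ : (EuclideanSpace ℝ (Fin n)) → ℝ) (x : (EuclideanSpace ℝ (Fin n))) : pdir φ x 0 = 0 := by
  have h : Qd φ x 0 '' Set.Ioi (0 : ℝ) = {0} := by
    have h1 : ∀ t : ℝ, Qd φ x (0 : (EuclideanSpace ℝ (Fin n))) t = 0 := by intro t; simp [Qd]
    ext y
    simp only [Set.mem_image, Set.mem_Ioi, Set.mem_singleton_iff]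
    constructor
    · rintro ⟨t, ht, rfl⟩; exact h1 t
    · rintro rfl; exact ⟨1, one_pos, h1 1⟩
  rw [pdir, h, csInf_singleton]

lemma pdir_add (hφ : ConvexOn ℝ Set.univ φ) (x d₁ d₂ : (EuclideanSpace ℝ (Fin n))) :
    pdir φ x (d₁ + d₂) ≤ pdir φ x d₁ + pdir φ x d₂ := by
  apply le_of_forall_pos_le_add
  intro ε hε
  obtain ⟨t₁, ht₁, hQ₁⟩ := exists_Qd_small hφ x d₁ (half_pos hε)
  obtain ⟨t₂, ht₂, hQ₂⟩ := exists_Qd_small hφ x d₂ (half_pos hε)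
  set u : ℝ := min t₁ t₂ / 2 with hu
  have hu0 : 0 < u := by positivity
  have h2u1 : 2 * u ≤ t₁ := by
    have := min_le_left t₁ t₂; simp only [hu]; linarith
  have h2u2 : 2 * u ≤ t₂ := by
    have := min_le_right t₁ t₂; simp only [hu]; linarith
  have key := hφ.2 (Set.mem_univ (x + (2*u) • d₁)) (Set.mem_univ (x + (2*u) • d₂))
    (by norm_num : (0:ℝ) ≤ 1/2) (by norm_num : (0:ℝ) ≤ 1/2) (by norm_num)
  have hpt : (1/2 : ℝ) • (x + (2*u) • d₁) + (1/2 : ℝ) • (x + (2*u) • d₂)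
      = x + u • (d₁ + d₂) := by module
  rw [hpt] at key
  simp only [smul_eq_mul] at key
  have hQsum : Qd φ x (d₁ + d₂) u ≤ Qd φ x d₁ (2*u) + Qd φ x d₂ (2*u) := by
    rw [Qd, Qd, Qd, ← add_div, div_le_div_iff₀ hu0 (by linarith)]
    nlinarith [key]
  calc pdir φ x (d₁ + d₂) ≤ Qd φ x (d₁ + d₂) u := pdir_le_Qd hφ x _ hu0
    _ ≤ Qd φ x d₁ (2*u) + Qd φ x d₂ (2*u) := hQsum
    _ ≤ (pdir φ x d₁ + ε/2) + (pdir φ x d₂ + ε/2) := by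
        gcongr
        · exact hQ₁ _ (by linarith) h2u1
        · exact hQ₂ _ (by linarith) h2u2
    _ = pdir φ x d₁ + pdir φ x d₂ + ε := by ring

lemma Qd_smul (φ : (EuclideanSpace ℝ (Fin n)) → ℝ) (x d : (EuclideanSpace ℝ (Fin n))) {c t : ℝ} (hc : 0 < c) (ht : t ≠ 0) :
    Qd φ x (c • d) t = c * Qd φ x d (c * t) := by
  rw [Qd, Qd, smul_smul, mul_comm t c]
  field_simp

lemma pdir_smul (φ : (EuclideanSpace ℝ (Fin n)) → ℝ) (x d : (EuclideanSpace ℝ (Fin n))) {c : ℝ} (hc : 0 < c) :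
    pdir φ x (c • d) = c * pdir φ x d := by
  have himg : Qd φ x (c • d) '' Set.Ioi (0:ℝ) = c • (Qd φ x d '' Set.Ioi (0:ℝ)) := by
    ext y
    simp only [Set.mem_image, Set.mem_Ioi, Set.mem_smul_set]
    constructor
    · rintro ⟨t, ht, rfl⟩
      refine ⟨Qd φ x d (c * t), ⟨c * t, by positivity, rfl⟩, ?_⟩
      rw [smul_eq_mul]
      exact (Qd_smul φ x d hc ht.ne').symm
    · rintro ⟨y', ⟨t, ht, rfl⟩, rfl⟩
      refine ⟨t / c, by positivity, ?_⟩
      rw [smul_eq_mul, Qd_smul φ x d hc (by positivity : t / c ≠ 0),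
        mul_div_cancel₀ _ hc.ne']
  rw [pdir, pdir, himg, Real.sInf_smul_of_nonneg hc.le, smul_eq_mul]

/-- Any linear functional dominated by `pdir` gives a subgradient. -/
lemma mem_subdiff_of_le_pdir (hφ : ConvexOn ℝ Set.univ φ) (x : (EuclideanSpace ℝ (Fin n))) (g : (EuclideanSpace ℝ (Fin n)) →ₗ[ℝ] ℝ)
    (hg : ∀ u, g u ≤ pdir φ x u) :
    ((InnerProductSpace.toDual ℝ (EuclideanSpace ℝ (Fin n))).symm
      (LinearMap.toContinuousLinearMap g)) ∈ subdiff φ x := by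
  intro y
  have h1 : ⟪(InnerProductSpace.toDual ℝ (EuclideanSpace ℝ (Fin n))).symm
      (LinearMap.toContinuousLinearMap g), y - x⟫ = g (y - x) :=
    InnerProductSpace.toDual_symm_apply
  rw [h1]
  have h2 : g (y - x) ≤ pdir φ x (y - x) := hg _
  have h3 : pdir φ x (y - x) ≤ Qd φ x (y - x) 1 := pdir_le_Qd hφ x _ one_pos
  have h4 : Qd φ x (y - x) 1 = φ y - φ x := by
    rw [Qd]; simp
  linarith

lemma exists_subgrad_eq (hφ : ConvexOn ℝ Set.univ φ) (x : (EuclideanSpace ℝ (Fin n))) {d : (EuclideanSpace ℝ (Fin n))} (hd : d ≠ 0) :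
    ∃ s ∈ subdiff φ x, ⟪s, d⟫ = pdir φ x d := by
  classical
  have H0 : ∀ c : ℝ, c • d = 0 → c • pdir φ x d = 0 := by
    intro c hc
    rcases smul_eq_zero.mp hc with h | h
    · rw [h, zero_smul]
    · exact absurd h hd
  have hdom : ∀ u : (LinearPMap.mkSpanSingleton' (σ := RingHom.id ℝ) d (pdir φ x d) H0).domain,
      (LinearPMap.mkSpanSingleton' (σ := RingHom.id ℝ) d (pdir φ x d) H0) u ≤ pdir φ x u := by
    rintro ⟨u, hu⟩
    have hu' := hu
    rw [LinearPMap.domain_mkSpanSingleton] at hu'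
    obtain ⟨c, rfl⟩ := Submodule.mem_span_singleton.mp hu'
    rw [LinearPMap.mkSpanSingleton'_apply]
    show c • pdir φ x d ≤ pdir φ x (c • d)
    rcases lt_trichotomy c 0 with hc | hc | hc
    · have h1 : pdir φ x (c • d) = (-c) * pdir φ x (-d) := by
        rw [show c • d = (-c) • (-d) by module]
        exact pdir_smul φ x (-d) (by linarith)
      have h2 : 0 ≤ pdir φ x d + pdir φ x (-d) := by
        have := pdir_add hφ x d (-d)
        rw [show d + -d = (0 : EuclideanSpace ℝ (Fin n)) by module, pdir_zero] at this
        linarith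
      rw [h1, smul_eq_mul]
      nlinarith
    · subst hc; simp [pdir_zero]
    · rw [pdir_smul φ x d hc, smul_eq_mul]
  obtain ⟨g, hgF, hgle⟩ := exists_extension_of_le_sublinear
    (LinearPMap.mkSpanSingleton' (σ := RingHom.id ℝ) d (pdir φ x d) H0) (pdir φ x)
    (fun c hc u => pdir_smul φ x u hc) (pdir_add hφ x) hdom
  refine ⟨_, mem_subdiff_of_le_pdir hφ x g hgle, ?_⟩
  have h1 : ⟪(InnerProductSpace.toDual ℝ (EuclideanSpace ℝ (Fin n))).symm
      (LinearMap.toContinuousLinearMap g), d⟫ = g d :=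
    InnerProductSpace.toDual_symm_apply
  rw [h1]
  have hdmem : d ∈ (LinearPMap.mkSpanSingleton' (σ := RingHom.id ℝ) d (pdir φ x d) H0).domain := by
    rw [LinearPMap.domain_mkSpanSingleton]
    exact Submodule.mem_span_singleton_self d
  have h2 := hgF ⟨d, hdmem⟩
  have h3 : (LinearPMap.mkSpanSingleton' (σ := RingHom.id ℝ) d (pdir φ x d) H0) ⟨d, hdmem⟩ = pdir φ x d :=
    LinearPMap.mkSpanSingleton'_apply_self (σ := RingHom.id ℝ) d (pdir φ x d) H0 _
  exact h2.trans h3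

lemma subdiff_nonempty (hφ : ConvexOn ℝ Set.univ φ) (x : (EuclideanSpace ℝ (Fin n))) : (subdiff φ x).Nonempty := by
  rcases subsingleton_or_nontrivial (EuclideanSpace ℝ (Fin n)) with h | h
  · refine ⟨0, fun y => ?_⟩
    have : y = x := Subsingleton.elim _ _
    simp [this]
  · obtain ⟨d, hd⟩ := exists_ne (0 : EuclideanSpace ℝ (Fin n))
    obtain ⟨s, hs, _⟩ := exists_subgrad_eq hφ x hd
    exact ⟨s, hs⟩

lemma exists_subgrad (hφ : ConvexOn ℝ Set.univ φ) (x d : (EuclideanSpace ℝ (Fin n))) :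
    ∃ s ∈ subdiff φ x, ⟪s, d⟫ = pdir φ x d := by
  by_cases hd : d = 0
  · obtain ⟨s, hs⟩ := subdiff_nonempty hφ x
    refine ⟨s, hs, ?_⟩
    rw [hd, pdir_zero, inner_zero_right]
  · exact exists_subgrad_eq hφ x hd

end DirDeriv

section Cpt

variable {n : ℕ}

lemma convex_subdiff (φ : EuclideanSpace ℝ (Fin n) → ℝ) (x : EuclideanSpace ℝ (Fin n)) :
    Convex ℝ (subdiff φ x) := by
  intro s₁ h₁ s₂ h₂ a b ha hb hab
  intro y
  have e1 := h₁ y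
  have e2 := h₂ y
  have hinner : ⟪a • s₁ + b • s₂, y - x⟫ = a * ⟪s₁, y - x⟫ + b * ⟪s₂, y - x⟫ := by
    rw [inner_add_left, real_inner_smul_left, real_inner_smul_left]
  rw [hinner]
  have e3 := add_le_add (mul_le_mul_of_nonneg_left e1 ha) (mul_le_mul_of_nonneg_left e2 hb)
  have e4 : a * (φ x + ⟪s₁, y - x⟫) + b * (φ x + ⟪s₂, y - x⟫)
      = φ x + (a * ⟪s₁, y - x⟫ + b * ⟪s₂, y - x⟫) := by
    linear_combination (φ x) * hab
  have e5 : a * φ y + b * φ y = φ y := by linear_combination (φ y) * hab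
  linarith

lemma isClosed_subdiff (φ : EuclideanSpace ℝ (Fin n) → ℝ) (x : EuclideanSpace ℝ (Fin n)) :
    IsClosed (subdiff φ x) := by
  have h : subdiff φ x = ⋂ y, {s : EuclideanSpace ℝ (Fin n) | φ x + ⟪s, y - x⟫ ≤ φ y} := by
    ext s
    simp only [subdiff, Set.mem_setOf_eq, Set.mem_iInter]
  rw [h]
  apply isClosed_iInter
  intro y
  apply isClosed_le
  · exact continuous_const.add (continuous_id.inner continuous_const)
  · exact continuous_const

lemma isCompact_subdiff {φ : EuclideanSpace ℝ (Fin n) → ℝ} (hφ : ConvexOn ℝ Set.univ φ)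
    (x : EuclideanSpace ℝ (Fin n)) : IsCompact (subdiff φ x) := by
  have hcont : Continuous φ := by
    have := ConvexOn.continuousOn isOpen_univ hφ
    rwa [continuousOn_univ] at this
  obtain ⟨y0, -, hy0⟩ := (isCompact_closedBall x 1).exists_isMaxOn
    (Metric.nonempty_closedBall.mpr one_pos.le) hcont.continuousOn
  set M := φ y0 with hM
  have hbdd : ∀ s ∈ subdiff φ x, ‖s‖ ≤ M - φ x := by
    intro s hs
    rcases eq_or_ne s 0 with rfl | hs0
    · have : φ x ≤ φ y0 := hy0 (Metric.mem_closedBall_self one_pos.le)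
      simp only [norm_zero]
      linarith
    · have hns : (0:ℝ) < ‖s‖ := norm_pos_iff.mpr hs0
      have hmem : x + ‖s‖⁻¹ • s ∈ Metric.closedBall x 1 := by
        rw [Metric.mem_closedBall, dist_eq_norm, add_sub_cancel_left, norm_smul,
          norm_inv, norm_norm, inv_mul_cancel₀ hns.ne']
      have h1 := hs (x + ‖s‖⁻¹ • s)
      rw [add_sub_cancel_left, real_inner_smul_right, real_inner_self_eq_norm_sq] at h1
      have h2 : ‖s‖⁻¹ * ‖s‖ ^ 2 = ‖s‖ := by
        field_simp
      rw [h2] at h1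
      have h3 : φ (x + ‖s‖⁻¹ • s) ≤ φ y0 := hy0 hmem
      linarith
  apply Metric.isCompact_of_isClosed_isBounded (isClosed_subdiff φ x)
  apply Bornology.IsBounded.subset (Metric.isBounded_closedBall (x := 0) (r := M - φ x))
  intro s hs
  rw [Metric.mem_closedBall, dist_zero_right]
  exact hbdd s hs

lemma convex_msum {N : ℕ} (f : Fin N → EuclideanSpace ℝ (Fin n) → ℝ)
    (x : EuclideanSpace ℝ (Fin n)) (I : Finset (Fin N)) :
    Convex ℝ {s : EuclideanSpace ℝ (Fin n) | ∃ g : Fin N → EuclideanSpace ℝ (Fin n),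
      (∀ i ∈ I, g i ∈ subdiff (f i) x) ∧ s = ∑ i ∈ I, g i} := by
  rintro s₁ ⟨g₁, hg₁, rfl⟩ s₂ ⟨g₂, hg₂, rfl⟩ a b ha hb hab
  refine ⟨fun i => a • g₁ i + b • g₂ i, fun i hi => ?_, ?_⟩
  · exact convex_subdiff (f i) x (hg₁ i hi) (hg₂ i hi) ha hb hab
  · rw [Finset.smul_sum, Finset.smul_sum, ← Finset.sum_add_distrib]

lemma nonempty_msum {N : ℕ} {f : Fin N → EuclideanSpace ℝ (Fin n) → ℝ}
    (hf : ∀ i, ConvexOn ℝ Set.univ (f i)) (x : EuclideanSpace ℝ (Fin n)) (I : Finset (Fin N)) :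
    {s : EuclideanSpace ℝ (Fin n) | ∃ g : Fin N → EuclideanSpace ℝ (Fin n),
      (∀ i ∈ I, g i ∈ subdiff (f i) x) ∧ s = ∑ i ∈ I, g i}.Nonempty := by
  classical
  choose g hg using fun i => subdiff_nonempty (hf i) x
  exact ⟨∑ i ∈ I, g i, g, fun i _ => hg i, rfl⟩

lemma isCompact_msum {N : ℕ} {f : Fin N → EuclideanSpace ℝ (Fin n) → ℝ}
    (hf : ∀ i, ConvexOn ℝ Set.univ (f i)) (x : EuclideanSpace ℝ (Fin n)) (I : Finset (Fin N)) :
    IsCompact {s : EuclideanSpace ℝ (Fin n) | ∃ g : Fin N → EuclideanSpace ℝ (Fin n),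
      (∀ i ∈ I, g i ∈ subdiff (f i) x) ∧ s = ∑ i ∈ I, g i} := by
  classical
  have hset : {s : EuclideanSpace ℝ (Fin n) | ∃ g : Fin N → EuclideanSpace ℝ (Fin n),
      (∀ i ∈ I, g i ∈ subdiff (f i) x) ∧ s = ∑ i ∈ I, g i}
      = (fun g : Fin N → EuclideanSpace ℝ (Fin n) => ∑ i ∈ I, g i) ''
        (Set.univ.pi fun i => if i ∈ I then subdiff (f i) x else {0}) := by
    ext s
    constructor
    · rintro ⟨g, hg, rfl⟩
      refine ⟨fun i => if i ∈ I then g i else 0, fun i _ => ?_, ?_⟩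
      · by_cases hi : i ∈ I
        · simp only [hi, if_true]
          exact hg i hi
        · simp only [hi, if_false]
          exact Set.mem_singleton 0
      · exact (Finset.sum_congr rfl fun i hi => by simp [hi]).symm
    · rintro ⟨g, hg, rfl⟩
      refine ⟨g, fun i hi => ?_, rfl⟩
      have := hg i (Set.mem_univ i)
      simpa only [hi, if_true] using this
  rw [hset]
  apply IsCompact.image
  · exact isCompact_univ_pi fun i => by
      by_cases hi : i ∈ I
      · simp only [hi, if_true]
        exact isCompact_subdiff (hf i) x
      · simp only [hi, if_false]
        exact isCompact_singleton
  · exact continuous_finset_sum _ fun i _ => continuous_apply i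

lemma isCompact_convexJoin {s t : Set (EuclideanSpace ℝ (Fin n))}
    (hs : IsCompact s) (ht : IsCompact t) : IsCompact (convexJoin ℝ s t) := by
  have h : convexJoin ℝ s t =
      (fun p : ℝ × (EuclideanSpace ℝ (Fin n)) × (EuclideanSpace ℝ (Fin n)) =>
        p.1 • p.2.1 + (1 - p.1) • p.2.2) '' (Set.Icc (0:ℝ) 1 ×ˢ s ×ˢ t) := by
    ext y
    simp only [mem_convexJoin, Set.mem_image, Set.mem_prod, Set.mem_Icc, Prod.exists]
    constructor
    · rintro ⟨a, ha, b, hb, hy⟩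
      obtain ⟨u, v, hu, hv, huv, rfl⟩ := hy
      exact ⟨u, a, b, ⟨⟨hu, by linarith⟩, ha, hb⟩, by rw [show 1 - u = v by linarith]⟩
    · rintro ⟨u, a, b, ⟨⟨h0, h1⟩, ha, hb⟩, rfl⟩
      exact ⟨a, ha, b, hb, u, 1 - u, h0, by linarith, by ring, rfl⟩
  rw [h]
  apply IsCompact.image (isCompact_Icc.prod (hs.prod ht))
  fun_prop

lemma isCompact_convexHull_biUnion {ι : Type*} [DecidableEq ι] (𝒜 : Finset ι)
    (M : ι → Set (EuclideanSpace ℝ (Fin n)))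
    (hconv : ∀ i ∈ 𝒜, Convex ℝ (M i)) (hne : ∀ i ∈ 𝒜, (M i).Nonempty)
    (hcpt : ∀ i ∈ 𝒜, IsCompact (M i)) :
    IsCompact (convexHull ℝ (⋃ i ∈ 𝒜, M i)) := by
  induction 𝒜 using Finset.cons_induction with
  | empty => simp
  | cons a s ha ih =>
    rw [Finset.cons_eq_insert, Finset.set_biUnion_insert]
    rcases s.eq_empty_or_nonempty with rfl | hsne
    · simp only [Finset.notMem_empty, Set.iUnion_of_empty, Set.iUnion_empty, Set.union_empty]
      rw [(hconv a (Finset.mem_cons_self a _)).convexHull_eq]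
      exact hcpt a (Finset.mem_cons_self a _)
    · have hbne : (⋃ i ∈ s, M i).Nonempty := by
        obtain ⟨i, hi⟩ := hsne
        obtain ⟨y, hy⟩ := hne i (Finset.mem_cons_of_mem hi)
        exact ⟨y, Set.mem_biUnion hi hy⟩
      rw [convexHull_union (hne a (Finset.mem_cons_self a _)) hbne]
      apply isCompact_convexJoin
      · rw [(hconv a (Finset.mem_cons_self a _)).convexHull_eq]
        exact hcpt a (Finset.mem_cons_self a _)
      · exact ih (fun i hi => hconv i (Finset.mem_cons_of_mem hi))
          (fun i hi => hne i (Finset.mem_cons_of_mem hi))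
          (fun i hi => hcpt i (Finset.mem_cons_of_mem hi))

end Cpt
section KeyIneq

variable {n : ℕ}

lemma key_ineq {N T : ℕ} (hT1 : 1 ≤ T) (hTN : T ≤ N)
    (f : Fin N → EuclideanSpace ℝ (Fin n) → ℝ) (hf : ∀ i, ConvexOn ℝ Set.univ (f i))
    (x : EuclideanSpace ℝ (Fin n)) {s : EuclideanSpace ℝ (Fin n)}
    (hs : s ∈ subdiff (fun y => topSum T (fun i => f i y)) x)
    (d : EuclideanSpace ℝ (Fin n)) :
    ∃ I : Finset (Fin N), (I.card = T ∧ ∑ i ∈ I, f i x = topSum T (fun i => f i x)) ∧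
      ⟪s, d⟫ ≤ ∑ i ∈ I, pdir (f i) x d := by
  classical
  set 𝒜 : Finset (Finset (Fin N)) := Finset.univ.filter
    (fun I => I.card = T ∧ ∑ i ∈ I, f i x = topSum T (fun i => f i x)) with h𝒜
  obtain ⟨I₀, hI₀c, hI₀a⟩ := exists_topSum hTN (fun i => f i x)
  have hI₀ : I₀ ∈ 𝒜 := by simp [h𝒜, hI₀c, hI₀a]
  obtain ⟨I, hI, hImax⟩ := 𝒜.exists_max_image (fun I => ∑ i ∈ I, pdir (f i) x d) ⟨I₀, hI₀⟩
  have hIc : I.card = T := by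
    have := hI; simp only [h𝒜, Finset.mem_filter, Finset.mem_univ, true_and] at this
    exact this.1
  have hIa : ∑ i ∈ I, f i x = topSum T (fun i => f i x) := by
    have := hI; simp only [h𝒜, Finset.mem_filter, Finset.mem_univ, true_and] at this
    exact this.2
  refine ⟨I, ⟨hIc, hIa⟩, ?_⟩
  apply le_of_forall_pos_le_add
  intro ε hε
  -- choose small parameters for each coordinate
  have hεT : (0:ℝ) < ε / T := by positivity
  have hch : ∀ i : Fin N, ∃ t : ℝ, 0 < t ∧ ∀ u : ℝ, 0 < u → u ≤ t →
      Qd (f i) x d u ≤ pdir (f i) x d + ε / T :=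
    fun i => exists_Qd_small (hf i) x d hεT
  choose tt htt hQtt using hch
  -- all card-T subsets, with max/min of pdir-sums
  set K : Finset (Finset (Fin N)) := Finset.univ.filter (fun I => I.card = T) with hK
  have hI₀K : I₀ ∈ K := by simp [hK, hI₀c]
  have hKne : K.Nonempty := ⟨I₀, hI₀K⟩
  obtain ⟨Jmx, hJmx, hMx⟩ := K.exists_max_image (fun J => ∑ i ∈ J, pdir (f i) x d) hKne
  obtain ⟨Jmn, hJmn, hMn⟩ := K.exists_min_image (fun J => ∑ i ∈ J, pdir (f i) x d) hKne
  set Pmx : ℝ := ∑ i ∈ Jmx, pdir (f i) x d with hPmx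
  set Pmn : ℝ := ∑ i ∈ Jmn, pdir (f i) x d with hPmn
  set C : ℝ := Pmx + ε - Pmn + 1 with hC
  have hC0 : 0 < C := by
    have h1 := hMn Jmx hJmx
    simp only [hC]
    linarith
  -- δ : the activity gap
  set In : Finset (Finset (Fin N)) := Finset.univ.filter
    (fun I => I.card = T ∧ ∑ i ∈ I, f i x ≠ topSum T (fun i => f i x)) with hIn
  set δ : ℝ := if h : In.Nonempty then
      (In.image (fun I => topSum T (fun i => f i x) - ∑ i ∈ I, f i x)).min' (h.image _)
    else 1 with hδ
  have hδle : ∀ J ∈ In, δ ≤ topSum T (fun i => f i x) - ∑ i ∈ J, f i x := by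
    intro J hJ
    rw [hδ, dif_pos ⟨J, hJ⟩]
    exact Finset.min'_le _ _ (Finset.mem_image_of_mem _ hJ)
  have hδpos : 0 < δ := by
    rw [hδ]
    split_ifs with h
    · obtain ⟨J, hJ, hJeq⟩ := Finset.mem_image.mp (Finset.min'_mem
        (In.image (fun I => topSum T (fun i => f i x) - ∑ i ∈ I, f i x)) (h.image _))
      rw [← hJeq]
      have hJ' := hJ
      simp only [hIn, Finset.mem_filter, Finset.mem_univ, true_and] at hJ'
      have hle := sum_le_topSum hTN (fun i => f i x) hJ'.1
      cases lt_or_eq_of_le hle with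
      | inl hlt => linarith
      | inr heq => exact absurd heq hJ'.2
    · exact one_pos
  -- choose t
  have hFinN : Nonempty (Fin N) := ⟨⟨0, by omega⟩⟩
  have hunivne : (Finset.univ : Finset (Fin N)).Nonempty := Finset.univ_nonempty
  set t0 : ℝ := Finset.univ.inf' hunivne tt with ht0
  have ht00 : 0 < t0 := by
    rw [ht0, Finset.lt_inf'_iff]
    exact fun i _ => htt i
  set t : ℝ := min t0 (δ / (2 * C)) with ht
  have ht0' : 0 < t := lt_min ht00 (by positivity)
  have htle : ∀ i : Fin N, t ≤ tt i :=
    fun i => le_trans (min_le_left _ _) (Finset.inf'_le _ (Finset.mem_univ i))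
  have hQle : ∀ i, Qd (f i) x d t ≤ pdir (f i) x d + ε / T := fun i => hQtt i t ht0' (htle i)
  have hQge : ∀ i, pdir (f i) x d ≤ Qd (f i) x d t := fun i => pdir_le_Qd (hf i) x d ht0'
  have hfid : ∀ i, f i (x + t • d) = f i x + t * Qd (f i) x d t := by
    intro i
    rw [Qd]
    field_simp
    ring
  have hsumid : ∀ J : Finset (Fin N),
      ∑ i ∈ J, f i (x + t • d) = ∑ i ∈ J, f i x + t * ∑ i ∈ J, Qd (f i) x d t := by
    intro J
    rw [Finset.mul_sum, ← Finset.sum_add_distrib]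
    exact Finset.sum_congr rfl fun i _ => hfid i
  have hsumQ : ∀ J : Finset (Fin N), J.card = T →
      ∑ i ∈ J, Qd (f i) x d t ≤ ∑ i ∈ J, pdir (f i) x d + ε := by
    intro J hJ
    have h1 : ∑ i ∈ J, Qd (f i) x d t ≤ ∑ i ∈ J, (pdir (f i) x d + ε / T) :=
      Finset.sum_le_sum fun i _ => hQle i
    have h2 : ∑ i ∈ J, (pdir (f i) x d + ε / T) = ∑ i ∈ J, pdir (f i) x d + ε := by
      rw [Finset.sum_add_distrib, Finset.sum_const, hJ, nsmul_eq_mul]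
      have hT0 : (T:ℝ) ≠ 0 := by positivity
      field_simp
    linarith
  -- maximizing subset at x + t • d
  obtain ⟨J, hJc, hJs⟩ := exists_topSum hTN (fun i => f i (x + t • d))
  -- lower bound on H(x+td)
  have hlow : topSum T (fun i => f i x) + t * ∑ i ∈ I, pdir (f i) x d
      ≤ topSum T (fun i => f i (x + t • d)) := by
    have h1 : ∑ i ∈ I, f i (x + t • d) ≤ topSum T (fun i => f i (x + t • d)) :=
      sum_le_topSum hTN _ hIc
    have h2 := hsumid I
    have h3 : ∑ i ∈ I, pdir (f i) x d ≤ ∑ i ∈ I, Qd (f i) x d t :=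
      Finset.sum_le_sum fun i _ => hQge i
    have h4 := mul_le_mul_of_nonneg_left h3 ht0'.le
    rw [hIa] at h2
    linarith
  -- J is active
  have hJa : ∑ i ∈ J, f i x = topSum T (fun i => f i x) := by
    by_contra hne
    have hJIn : J ∈ In := by
      simp only [hIn, Finset.mem_filter, Finset.mem_univ, true_and]
      exact ⟨hJc, hne⟩
    have hd1 := hδle J hJIn
    have h2 := hsumid J
    have h4 := hsumQ J hJc
    have hJK : J ∈ K := by simp [hK, hJc]
    have hIK : I ∈ K := by simp [hK, hIc]
    have hb1 : ∑ i ∈ J, pdir (f i) x d ≤ Pmx := hMx J hJK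
    have hb2 : Pmn ≤ ∑ i ∈ I, pdir (f i) x d := hMn I hIK
    have htC : t * C ≤ δ / 2 := by
      have h5 : t ≤ δ / (2 * C) := min_le_right _ _
      have h6 := mul_le_mul_of_nonneg_right h5 hC0.le
      have h7 : δ / (2 * C) * C = δ / 2 := by
        field_simp
      linarith
    have h8 : t * (∑ i ∈ J, Qd (f i) x d t) ≤ t * (Pmx + ε) :=
      mul_le_mul_of_nonneg_left (by linarith) ht0'.le
    have h9 : t * Pmn ≤ t * (∑ i ∈ I, pdir (f i) x d) :=
      mul_le_mul_of_nonneg_left hb2 ht0'.le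
    have h10 : t * (Pmx + ε) - t * Pmn = t * C - t := by
      rw [hC]; ring
    -- topSum x + t*Σ_I pdir ≤ topSum(x+td) = Σ_J fx + tΣ_J Q ≤ (topSum x - δ) + t(Pmx+ε)
    rw [← hJs] at hlow
    linarith
  -- conclude
  have hJ𝒜 : J ∈ 𝒜 := by
    simp only [h𝒜, Finset.mem_filter, Finset.mem_univ, true_and]
    exact ⟨hJc, hJa⟩
  have hsd := hs (x + t • d)
  simp only [add_sub_cancel_left, real_inner_smul_right] at hsd
  have h2 := hsumid J
  rw [← hJs] at hsd
  rw [hJa] at h2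
  -- t * ⟪s,d⟫ ≤ t * Σ_J Q ≤ t * (Σ_J pdir + ε) ≤ t * (Σ_I pdir + ε)
  have h11 : ∑ i ∈ J, pdir (f i) x d ≤ ∑ i ∈ I, pdir (f i) x d := hImax J hJ𝒜
  have h12 : t * (∑ i ∈ J, Qd (f i) x d t) ≤ t * (∑ i ∈ I, pdir (f i) x d + ε) :=
    mul_le_mul_of_nonneg_left (by linarith [hsumQ J hJc]) ht0'.le
  have h13 : t * ⟪s, d⟫ ≤ t * (∑ i ∈ I, pdir (f i) x d + ε) := by linarith
  have := (mul_le_mul_iff_right₀ ht0').mp h13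
  linarith

end KeyIneq

/-- for convex `f_1,…,f_N` and `H(x)` the sum of the `T` largest values among
`f_1(x),…,f_N(x)`, the subdifferential `∂H(x)` is the convex hull, over all active index sets
`I` (`|I| = T` and `∑_{i∈I} f_i(x) = H(x)`), of the Minkowski sums `∑_{i∈I} ∂f_i(x)`. -/
theorem stmt4 (n N T : ℕ) (hT1 : 1 ≤ T) (hTN : T ≤ N)
    (f : Fin N → EuclideanSpace ℝ (Fin n) → ℝ)
    (hf : ∀ i, ConvexOn ℝ Set.univ (f i)) (x : EuclideanSpace ℝ (Fin n)) :
    subdiff (fun y => topSum T (fun i => f i y)) x =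
      convexHull ℝ (⋃ I ∈ {I : Finset (Fin N) |
            I.card = T ∧ ∑ i ∈ I, f i x = topSum T (fun i => f i x)},
        {s : EuclideanSpace ℝ (Fin n) | ∃ g : Fin N → EuclideanSpace ℝ (Fin n),
          (∀ i ∈ I, g i ∈ subdiff (f i) x) ∧ s = ∑ i ∈ I, g i}) := by
  classical
  set 𝒜 : Finset (Finset (Fin N)) := Finset.univ.filter
    (fun I => I.card = T ∧ ∑ i ∈ I, f i x = topSum T (fun i => f i x)) with h𝒜
  have hUeq : (⋃ I ∈ {I : Finset (Fin N) |
        I.card = T ∧ ∑ i ∈ I, f i x = topSum T (fun i => f i x)},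
      {s : EuclideanSpace ℝ (Fin n) | ∃ g : Fin N → EuclideanSpace ℝ (Fin n),
        (∀ i ∈ I, g i ∈ subdiff (f i) x) ∧ s = ∑ i ∈ I, g i})
      = ⋃ I ∈ 𝒜, {s : EuclideanSpace ℝ (Fin n) | ∃ g : Fin N → EuclideanSpace ℝ (Fin n),
        (∀ i ∈ I, g i ∈ subdiff (f i) x) ∧ s = ∑ i ∈ I, g i} := by
    ext y
    simp only [Set.mem_iUnion, Set.mem_setOf_eq, h𝒜, Finset.mem_filter, Finset.mem_univ,
      true_and, Finset.mem_coe]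
  rw [hUeq]
  apply Set.Subset.antisymm
  · -- hard direction
    intro s hs
    by_contra hsC
    have hcpt : IsCompact (convexHull ℝ (⋃ I ∈ 𝒜,
        {s : EuclideanSpace ℝ (Fin n) | ∃ g : Fin N → EuclideanSpace ℝ (Fin n),
          (∀ i ∈ I, g i ∈ subdiff (f i) x) ∧ s = ∑ i ∈ I, g i})) :=
      isCompact_convexHull_biUnion 𝒜 _ (fun I _ => convex_msum f x I)
        (fun I _ => nonempty_msum hf x I) (fun I _ => isCompact_msum hf x I)
    obtain ⟨L, u, hLu, hus⟩ := geometric_hahn_banach_closed_point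
      (convex_convexHull ℝ _) hcpt.isClosed hsC
    set d := (InnerProductSpace.toDual ℝ (EuclideanSpace ℝ (Fin n))).symm L with hd
    have hdL : ∀ v, ⟪d, v⟫ = L v := fun v => InnerProductSpace.toDual_symm_apply
    obtain ⟨I, ⟨hIc, hIa⟩, hkey⟩ := key_ineq hT1 hTN f hf x hs d
    have hI𝒜 : I ∈ 𝒜 := by
      simp only [h𝒜, Finset.mem_filter, Finset.mem_univ, true_and]
      exact ⟨hIc, hIa⟩
    choose g hgmem hgval using fun i => exists_subgrad (hf i) x d
    have hb : (∑ i ∈ I, g i) ∈ ⋃ I ∈ 𝒜,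
        {s : EuclideanSpace ℝ (Fin n) | ∃ g : Fin N → EuclideanSpace ℝ (Fin n),
          (∀ i ∈ I, g i ∈ subdiff (f i) x) ∧ s = ∑ i ∈ I, g i} := by
      refine Set.mem_biUnion hI𝒜 ?_
      exact ⟨g, fun i _ => hgmem i, rfl⟩
    have h1 : L (∑ i ∈ I, g i) < u := hLu _ (subset_convexHull ℝ _ hb)
    have h2 : ⟪d, ∑ i ∈ I, g i⟫ = ∑ i ∈ I, pdir (f i) x d := by
      rw [inner_sum]
      exact Finset.sum_congr rfl fun i _ => by rw [real_inner_comm]; exact hgval i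
    have h3 : L s = ⟪s, d⟫ := by rw [← hdL s, real_inner_comm]
    have h4 : L (∑ i ∈ I, g i) = ∑ i ∈ I, pdir (f i) x d := by rw [← hdL _, h2]
    linarith
  · -- easy direction
    apply convexHull_min _ (convex_subdiff _ x)
    rintro s hs
    simp only [Set.mem_iUnion, Set.mem_setOf_eq, h𝒜, Finset.mem_filter, Finset.mem_univ,
      true_and] at hs
    obtain ⟨I, ⟨hIcard, hIact⟩, g, hg, rfl⟩ := hs
    intro y
    have h1 : ∑ i ∈ I, f i y ≤ topSum T (fun i => f i y) := sum_le_topSum hTN _ hIcard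
    have h2 : ∀ i ∈ I, f i x + ⟪g i, y - x⟫ ≤ f i y := fun i hi => hg i hi y
    have h3 : ⟪∑ i ∈ I, g i, y - x⟫ = ∑ i ∈ I, ⟪g i, y - x⟫ := sum_inner I _ _
    have h4 := Finset.sum_le_sum h2
    rw [Finset.sum_add_distrib] at h4
    show topSum T (fun i => f i x) + ⟪∑ i ∈ I, g i, y - x⟫ ≤ topSum T (fun i => f i y)
    rw [h3, ← hIact]
    linarith
end

section
/- Let g, h : ℝ^n → ℝ be convex with g ρ-strongly convex for some ρ ≥ 0, let f = g − h, let β ≥ 0, and let S ⊆ ℝ^n be a convex set. Fix x ∈ S and s_h ∈ ∂h(x), and suppose x⁺ ∈ S minimizes the function u ↦ g(u) − ⟨s_h, u − x⟩ + (β/2)‖u − x‖² over S. Then f(x⁺) ≤ f(x) − ((ρ+β)/2)‖x⁺ − x‖². -/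
open scoped RealInnerProductSpace

lemma key_norm_comb {n : ℕ} (u v : EuclideanSpace ℝ (Fin n)) {a b : ℝ}
    (ha : 0 ≤ a) (hb : 0 ≤ b) (hab : a + b = 1) :
    ‖a • u + b • v‖ ^ 2 = a * ‖u‖ ^ 2 + b * ‖v‖ ^ 2 - a * b * ‖u - v‖ ^ 2 := by
  rw [norm_add_sq_real, norm_sub_sq_real, norm_smul, norm_smul, real_inner_smul_left,
    real_inner_smul_right, Real.norm_of_nonneg ha, Real.norm_of_nonneg hb, mul_pow, mul_pow]
  obtain rfl := eq_sub_of_add_eq hab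
  ring

/-- sufficient decrease of one proximal DC iteration: if `g` is `ρ`-strongly
convex, `h` is convex, `f = g - h`, `β ≥ 0`, `x ∈ S`, `s_h ∈ ∂h(x)` and `x⁺ ∈ S` minimizes
`u ↦ g(u) - ⟨s_h, u - x⟩ + (β/2)‖u - x‖²` over the convex set `S`, then
`f(x⁺) ≤ f(x) - ((ρ+β)/2)‖x⁺ - x‖²`. -/
theorem stmt7 (n : ℕ) (g h : EuclideanSpace ℝ (Fin n) → ℝ) (ρ β : ℝ)
    (hρ : 0 ≤ ρ) (hβ : 0 ≤ β)
    (hg : ConvexOn ℝ Set.univ g)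
    (hgstrong : ConvexOn ℝ Set.univ (fun y => g y - ρ / 2 * ‖y‖ ^ 2))
    (hh : ConvexOn ℝ Set.univ h)
    (S : Set (EuclideanSpace ℝ (Fin n))) (hS : Convex ℝ S)
    (x : EuclideanSpace ℝ (Fin n)) (hxS : x ∈ S)
    (sh : EuclideanSpace ℝ (Fin n)) (hsh : sh ∈ subdiff h x)
    (xp : EuclideanSpace ℝ (Fin n)) (hxpS : xp ∈ S)
    (hmin : ∀ u ∈ S,
      g xp - ⟪sh, xp - x⟫ + β / 2 * ‖xp - x‖ ^ 2 ≤ g u - ⟪sh, u - x⟫ + β / 2 * ‖u - x‖ ^ 2) :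
    g xp - h xp ≤ (g x - h x) - (ρ + β) / 2 * ‖xp - x‖ ^ 2 := by
  set F : EuclideanSpace ℝ (Fin n) → ℝ :=
    fun u => g u - ⟪sh, u - x⟫ + β / 2 * ‖u - x‖ ^ 2 with hF
  -- strong convexity of F with parameter ρ + β
  have hFsc : ∀ (u v : EuclideanSpace ℝ (Fin n)) (a b : ℝ), 0 ≤ a → 0 ≤ b → a + b = 1 →
      F (a • u + b • v) ≤ a * F u + b * F v - a * b * ((ρ + β) / 2 * ‖u - v‖ ^ 2) := by
    intro u v a b ha hb hab
    have hG := hgstrong.2 (Set.mem_univ u) (Set.mem_univ v) ha hb hab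
    simp only [smul_eq_mul] at hG
    have e0 : ‖a • u + b • v‖ ^ 2 = a * ‖u‖ ^ 2 + b * ‖v‖ ^ 2 - a * b * ‖u - v‖ ^ 2 :=
      key_norm_comb u v ha hb hab
    have hx : a • x + b • x = x := by rw [← add_smul, hab, one_smul]
    have e1 : a • u + b • v - x = a • (u - x) + b • (v - x) := by
      conv_lhs => rw [← hx]
      rw [smul_sub, smul_sub]; abel
    have e2 : ⟪sh, a • u + b • v - x⟫ = a * ⟪sh, u - x⟫ + b * ⟪sh, v - x⟫ := by
      rw [e1, inner_add_right, real_inner_smul_right, real_inner_smul_right]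
    have e3 : ‖a • u + b • v - x‖ ^ 2
        = a * ‖u - x‖ ^ 2 + b * ‖v - x‖ ^ 2 - a * b * ‖u - v‖ ^ 2 := by
      have h4 := key_norm_comb (u - x) (v - x) ha hb hab
      rwa [sub_sub_sub_cancel_right, ← e1] at h4
    rw [e0] at hG
    simp only [hF]
    rw [e2, e3]
    nlinarith [hG]
  obtain ⟨c, hc⟩ : ∃ c, c = (ρ + β) / 2 * ‖xp - x‖ ^ 2 := ⟨_, rfl⟩
  have hc0 : 0 ≤ c := by rw [hc]; positivity
  -- key inequality: F xp + c ≤ F x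
  have hkey : F xp + c ≤ F x := by
    apply le_of_forall_pos_le_add
    intro ε hε
    have h1c : (0:ℝ) < 1 + c := by linarith
    obtain ⟨t, htdef⟩ : ∃ t, t = min 1 (ε / (1 + c)) := ⟨_, rfl⟩
    have ht0 : 0 < t := htdef ▸ lt_min one_pos (div_pos hε h1c)
    have ht1 : t ≤ 1 := htdef ▸ min_le_left _ _
    have htc : t * c ≤ ε := by
      have h1 : t * c ≤ (ε / (1 + c)) * c := by
        exact mul_le_mul_of_nonneg_right (htdef ▸ min_le_right 1 (ε / (1 + c))) hc0
      have h2 : (ε / (1 + c)) * c ≤ (ε / (1 + c)) * (1 + c) :=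
        mul_le_mul_of_nonneg_left (by linarith) (le_of_lt (div_pos hε h1c))
      have h3 : (ε / (1 + c)) * (1 + c) = ε := div_mul_cancel₀ _ (ne_of_gt h1c)
      linarith
    have hz : (1 - t) • xp + t • x ∈ S :=
      hS hxpS hxS (by linarith) (le_of_lt ht0) (by ring)
    have hA : F xp ≤ F ((1 - t) • xp + t • x) := by
      have := hmin ((1 - t) • xp + t • x) hz
      simpa [hF] using this
    have hB := hFsc xp x (1 - t) t (by linarith) (le_of_lt ht0) (by ring)
    rw [← hc] at hB
    have hAB : F xp ≤ (1 - t) * F xp + t * F x - (1 - t) * t * c := le_trans hA hB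
    have hmul : t * (F xp - F x + c) ≤ t * (t * c) := by nlinarith [hAB]
    have : F xp - F x + c ≤ t * c := le_of_mul_le_mul_left hmul ht0
    linarith
  have hFx : F x = g x := by simp [hF]
  have hFxp : F xp = g xp - ⟪sh, xp - x⟫ + β / 2 * ‖xp - x‖ ^ 2 := rfl
  have hsub : h x + ⟪sh, xp - x⟫ ≤ h xp := hsh xp
  have hβn : 0 ≤ β / 2 * ‖xp - x‖ ^ 2 := by positivity
  rw [hFx, hFxp, hc] at hkey
  linarith
end

section
/- Let g, h, G, H : ℝ^n → ℝ be convex, let X ⊆ ℝ^n be a nonempty closed convex set, let β ≥ 0, and let f = g − h. Suppose f* ∈ ℝ satisfies f(x) ≥ f* for every x ∈ X with G(x) ≤ H(x). Let x^0 ∈ X satisfy G(x^0) ≤ H(x^0), and suppose that for each j ≥ 0 there are s_h^j ∈ ∂h(x^j) and s_H^j ∈ ∂H(x^j) such that x^{j+1} minimizes u ↦ g(u) − ⟨s_h^j, u − x^j⟩ + (β/2)‖u − x^j‖² over {u ∈ X : G(u) − H(x^j) − ⟨s_H^j, u − x^j⟩ ≤ 0}. Then for every integer k ≥ 1 there exists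 ℓ ∈ {0,1,…,k−1} such that for every x ∈ X with G(x) − H(x^ℓ) − ⟨s_H^ℓ, x − x^ℓ⟩ ≤ 0 one has g(x) − g(x^ℓ) − ⟨s_h^ℓ, x − x^ℓ⟩ + (β/2)‖x − x^ℓ‖² ≥ −(f(x^0) − f*)/k. -/
open scoped RealInnerProductSpace

/-- O(1/k) iteration complexity of the proximal DC algorithm: along the
proximal DC iterates for `min{g - h : x ∈ X, G - H ≤ 0}` with optimal value lower bound `f*`,
for every `k ≥ 1` some iterate `ℓ < k` is an `(f(x⁰) - f*)/k`-approximate KKT point in the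
sense of the linearized subproblem optimality. -/
theorem stmt12 (n : ℕ) (g h G H : EuclideanSpace ℝ (Fin n) → ℝ)
    (hg : ConvexOn ℝ Set.univ g) (hh : ConvexOn ℝ Set.univ h)
    (hG : ConvexOn ℝ Set.univ G) (hH : ConvexOn ℝ Set.univ H)
    (X : Set (EuclideanSpace ℝ (Fin n))) (hXne : X.Nonempty) (hXcl : IsClosed X)
    (hXconv : Convex ℝ X) (β : ℝ) (hβ : 0 ≤ β)
    (fstar : ℝ) (hfstar : ∀ x ∈ X, G x ≤ H x → fstar ≤ g x - h x)
    (x : ℕ → EuclideanSpace ℝ (Fin n)) (hx0X : x 0 ∈ X) (hx0feas : G (x 0) ≤ H (x 0))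
    (sh sH : ℕ → EuclideanSpace ℝ (Fin n))
    (hsh : ∀ j, sh j ∈ subdiff h (x j)) (hsH : ∀ j, sH j ∈ subdiff H (x j))
    (hiter : ∀ j,
      (x (j + 1) ∈ X ∧ G (x (j + 1)) - H (x j) - ⟪sH j, x (j + 1) - x j⟫ ≤ 0) ∧
      ∀ u ∈ X, G u - H (x j) - ⟪sH j, u - x j⟫ ≤ 0 →
        g (x (j + 1)) - ⟪sh j, x (j + 1) - x j⟫ + β / 2 * ‖x (j + 1) - x j‖ ^ 2 ≤
          g u - ⟪sh j, u - x j⟫ + β / 2 * ‖u - x j‖ ^ 2)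
    (k : ℕ) (hk : 1 ≤ k) :
    ∃ l < k, ∀ x' ∈ X, G x' - H (x l) - ⟪sH l, x' - x l⟫ ≤ 0 →
      g x' - g (x l) - ⟪sh l, x' - x l⟫ + β / 2 * ‖x' - x l‖ ^ 2 ≥
        -((g (x 0) - h (x 0) - fstar) / k) := by
  set f : ℕ → ℝ := fun j => g (x j) - h (x j) with hf
  -- all iterates are feasible for the original problem
  have feas : ∀ j, x j ∈ X ∧ G (x j) ≤ H (x j) := by
    intro j
    induction j with
    | zero => exact ⟨hx0X, hx0feas⟩
    | succ j ih =>
      refine ⟨(hiter j).1.1, ?_⟩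
      have h1 := (hiter j).1.2
      have h2 := hsH j (x (j + 1))
      linarith
  -- lower bound f* on each iterate's value
  have hfstar' : ∀ j, fstar ≤ f j := fun j => hfstar (x j) (feas j).1 (feas j).2
  -- key inequality for each step
  have key : ∀ j, ∀ x' ∈ X, G x' - H (x j) - ⟪sH j, x' - x j⟫ ≤ 0 →
      g x' - g (x j) - ⟪sh j, x' - x j⟫ + β / 2 * ‖x' - x j‖ ^ 2 ≥ f (j + 1) - f j := by
    intro j x' hx' hfeas
    have h1 := (hiter j).2 x' hx' hfeas
    have h2 := hsh j (x (j + 1))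
    have h3 : 0 ≤ β / 2 * ‖x (j + 1) - x j‖ ^ 2 :=
      mul_nonneg (by linarith) (sq_nonneg _)
    simp only [hf]
    linarith
  -- D j measures the decrease at step j
  set D : ℕ → ℝ := fun j => f j - f (j + 1) with hD
  have htel : ∑ j ∈ Finset.range k, D j = f 0 - f k := Finset.sum_range_sub' f k
  obtain ⟨l, hl, hmin⟩ := Finset.exists_min_image (Finset.range k) D
    ⟨0, Finset.mem_range.mpr hk⟩
  have hsum : (k : ℝ) * D l ≤ f 0 - fstar := by
    have h1 : (Finset.range k).card • D l ≤ ∑ j ∈ Finset.range k, D j :=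
      Finset.card_nsmul_le_sum _ _ _ hmin
    simp only [Finset.card_range, nsmul_eq_mul] at h1
    have := hfstar' k
    linarith
  have hkpos : (0 : ℝ) < k := by exact_mod_cast hk
  have hDl : D l ≤ (f 0 - fstar) / k := (le_div_iff₀' hkpos).mpr hsum
  refine ⟨l, Finset.mem_range.mp hl, fun x' hx' hfeas => ?_⟩
  have h1 := key l x' hx' hfeas
  have : f 0 = g (x 0) - h (x 0) := rfl
  simp only [hD] at hDl
  linarith
end

section
/- Let f_1,…,f_N : ℝ^n → ℝ be convex functions and let w ∈ ℝ^N satisfy 0 ≤ w_i ≤ 1 for all i and Σ_{i=1}^N w_i = 1. Define G(x) = Σ_{i=1}^N w_i Σ_{j=i}^N Ĉ_[j](x) and H(x) = Σ_{i=1}^{N−1} w_i Σ_{j=i+1}^N Ĉ_[j](x), where Ĉ_[j](x) denotes the j-th smallest value among f_1(x),…,f_N(x). Then G and H are continuous convex functions on ℝ^n, and for every x ∈ ℝ^n one has Σ_{i=1}^N w_i Ĉ_[i](x) = G(x) − H(x); in particular, the L-estimator constraint Σ_{i=1}^N w_i Ĉ_[i](x) ≤ 0 is equivalent to the DC constraint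 G(x) − H(x) ≤ 0. -/
open scoped BigOperators

open Finset

section Aux

lemma aux_strictMono_val_le {k N : ℕ} {φ : Fin k → Fin N} (h : StrictMono φ) (m : Fin k) :
    (m : ℕ) ≤ (φ m : ℕ) := by
  suffices H : ∀ v : ℕ, ∀ m : Fin k, (m : ℕ) = v → v ≤ (φ m : ℕ) from H _ m rfl
  intro v
  induction v with
  | zero => intro m _; exact Nat.zero_le _
  | succ v ih =>
    intro m hm
    have hv : v < k := by omega
    have h1 := ih ⟨v, hv⟩ rfl
    have h2 : (⟨v, hv⟩ : Fin k) < m := by rw [Fin.lt_def]; simp; omega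
    have h3 := h h2
    rw [Fin.lt_def] at h3
    omega

lemma aux_strictMono_val_ge {k N : ℕ} {φ : Fin k → Fin N} (h : StrictMono φ) (m : Fin k) :
    (φ m : ℕ) ≤ N - k + m := by
  have hk : 0 < k := m.pos
  set ψ : Fin k → Fin N := fun j => (φ j.rev).rev with hψ
  have hψmono : StrictMono ψ := by
    intro a b hab
    simp only [hψ, Fin.rev_lt_rev]
    exact h (Fin.rev_lt_rev.mpr hab)
  have := aux_strictMono_val_le hψmono m.rev
  simp only [hψ, Fin.rev_rev, Fin.val_rev] at this
  have h1 : (m : ℕ) < k := m.isLt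
  have h2 : (φ m : ℕ) < N := (φ m).isLt
  omega

/-- Sum over "top" indices written as a sum over `Fin (N - c)`. -/
lemma aux_sum_topSet {N : ℕ} (g : Fin N → ℝ) (c : ℕ) (hc : c ≤ N) :
    ∑ j ∈ univ.filter (fun j : Fin N => c ≤ (j : ℕ)), g j
      = ∑ m : Fin (N - c), g ⟨c + (m : ℕ), by have := m.isLt; omega⟩ := by
  have himg : univ.filter (fun j : Fin N => c ≤ (j : ℕ))
      = Finset.image (fun m : Fin (N - c) =>
          (⟨c + (m : ℕ), by have := m.isLt; omega⟩ : Fin N)) univ := by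
    ext j
    simp only [mem_filter, mem_univ, true_and, Finset.mem_image]
    constructor
    · intro hj
      refine ⟨⟨(j : ℕ) - c, by have := j.isLt; omega⟩, ?_⟩
      ext
      simp
      omega
    · rintro ⟨m, rfl⟩
      simp
  rw [himg, Finset.sum_image]
  intro a _ b _ h
  have h2 := congrArg Fin.val h
  simp only at h2
  ext
  omega

lemma aux_card_topSet {N : ℕ} (c : ℕ) (hc : c ≤ N) :
    (univ.filter (fun j : Fin N => c ≤ (j : ℕ))).card = N - c := by
  classical
  have := aux_sum_topSet (fun _ : Fin N => (1 : ℝ)) c hc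
  simp only [Finset.sum_const, nsmul_eq_mul, mul_one, Finset.card_univ,
    Fintype.card_fin] at this
  exact_mod_cast this

/-- For a monotone `g`, any sum over `N - c` indices is at most the sum over the top
`N - c` indices. -/
lemma aux_sum_le_sum_topSet {N : ℕ} (g : Fin N → ℝ) (hg : Monotone g) (c : ℕ) (hc : c ≤ N)
    (T : Finset (Fin N)) (hT : T.card = N - c) :
    ∑ j ∈ T, g j ≤ ∑ j ∈ univ.filter (fun j : Fin N => c ≤ (j : ℕ)), g j := by
  set e := T.orderEmbOfFin hT with he
  have himage : Finset.image e univ = T := by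
    ext j
    simp only [Finset.mem_image, mem_univ, true_and]
    constructor
    · rintro ⟨m, rfl⟩; exact T.orderEmbOfFin_mem hT m
    · intro hj
      have : j ∈ Set.range e := by rw [Finset.range_orderEmbOfFin]; exact hj
      obtain ⟨m, hm⟩ := this
      exact ⟨m, hm⟩
  have hsum : ∑ j ∈ T, g j = ∑ m : Fin (N - c), g (e m) := by
    rw [← himage, Finset.sum_image (fun a _ b _ h => e.injective h)]
  rw [hsum, aux_sum_topSet g c hc]
  apply Finset.sum_le_sum
  intro m _
  apply hg
  have h1 := aux_strictMono_val_ge (T.orderEmbOfFin hT).strictMono m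
  rw [Fin.le_def]
  simp only [← he] at h1 ⊢
  omega

/-- Any sum of `N - c` entries of `z` is at most the sum of the top `N - c` order
statistics. -/
lemma aux_sum_le_orderStat {N : ℕ} (z : Fin N → ℝ) (c : ℕ) (hc : c ≤ N)
    (S : Finset (Fin N)) (hS : S.card = N - c) :
    ∑ t ∈ S, z t ≤ ∑ j ∈ univ.filter (fun j : Fin N => c ≤ (j : ℕ)), orderStat z j := by
  classical
  set σ := Tuple.sort z with hσ
  set T := S.image σ.symm with hTdef
  have hT : T.card = N - c := by
    rw [hTdef, Finset.card_image_of_injective _ σ.symm.injective, hS]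
  have hsum : ∑ j ∈ T, orderStat z j = ∑ t ∈ S, z t := by
    rw [hTdef, Finset.sum_image (fun a _ b _ h => σ.symm.injective h)]
    apply Finset.sum_congr rfl
    intro t _
    simp [orderStat, ← hσ]
  rw [← hsum]
  exact aux_sum_le_sum_topSet (orderStat z) (Tuple.monotone_sort z) c hc T hT

/-- The top sum of order statistics realized as a sum of the original entries. -/
lemma aux_orderStat_eq_sum {N : ℕ} (z : Fin N → ℝ) (c : ℕ) :
    ∑ j ∈ univ.filter (fun j : Fin N => c ≤ (j : ℕ)), orderStat z j
      = ∑ t ∈ (univ.filter (fun j : Fin N => c ≤ (j : ℕ))).image (Tuple.sort z), z t := by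
  rw [Finset.sum_image (fun a _ b _ h => (Tuple.sort z).injective h)]
  rfl

/-- The top sum of order statistics of convex functions is convex. -/
lemma aux_topSum_convexOn {n N : ℕ} (f : Fin N → EuclideanSpace ℝ (Fin n) → ℝ)
    (hf : ∀ i, ConvexOn ℝ Set.univ (f i)) (c : ℕ) (hc : c ≤ N) :
    ConvexOn ℝ Set.univ (fun x => ∑ j ∈ univ.filter (fun j : Fin N => c ≤ (j : ℕ)),
      orderStat (fun t => f t x) j) := by
  classical
  refine ⟨convex_univ, ?_⟩
  intro x _ y _ a b ha hb hab
  simp only [smul_eq_mul]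
  set zc := fun t => f t (a • x + b • y) with hzc
  set S0 := (univ.filter (fun j : Fin N => c ≤ (j : ℕ))).image (Tuple.sort zc) with hS0
  have hS0card : S0.card = N - c := by
    rw [hS0, Finset.card_image_of_injective _ (Tuple.sort zc).injective,
      aux_card_topSet c hc]
  have h1 : ∑ j ∈ univ.filter (fun j : Fin N => c ≤ (j : ℕ)), orderStat zc j
      = ∑ t ∈ S0, zc t := aux_orderStat_eq_sum zc c
  have h2 : ∑ t ∈ S0, zc t ≤ ∑ t ∈ S0, (a * f t x + b * f t y) := by
    apply Finset.sum_le_sum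
    intro t _
    have := (hf t).2 (Set.mem_univ x) (Set.mem_univ y) ha hb hab
    simpa [smul_eq_mul] using this
  have h3 : ∑ t ∈ S0, (a * f t x + b * f t y)
      = a * ∑ t ∈ S0, f t x + b * ∑ t ∈ S0, f t y := by
    rw [Finset.sum_add_distrib, Finset.mul_sum, Finset.mul_sum]
  have h4 : ∑ t ∈ S0, f t x
      ≤ ∑ j ∈ univ.filter (fun j : Fin N => c ≤ (j : ℕ)), orderStat (fun t => f t x) j :=
    aux_sum_le_orderStat (fun t => f t x) c hc S0 hS0card
  have h5 : ∑ t ∈ S0, f t y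
      ≤ ∑ j ∈ univ.filter (fun j : Fin N => c ≤ (j : ℕ)), orderStat (fun t => f t y) j :=
    aux_sum_le_orderStat (fun t => f t y) c hc S0 hS0card
  calc ∑ j ∈ univ.filter (fun j : Fin N => c ≤ (j : ℕ)), orderStat zc j
      = ∑ t ∈ S0, zc t := h1
    _ ≤ a * ∑ t ∈ S0, f t x + b * ∑ t ∈ S0, f t y := by rw [← h3]; exact h2
    _ ≤ _ := add_le_add (mul_le_mul_of_nonneg_left h4 ha) (mul_le_mul_of_nonneg_left h5 hb)

/-- A finite sum of convex functions is convex. -/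
lemma aux_convexOn_finset_sum {E : Type*} [AddCommGroup E] [Module ℝ E]
    {ι : Type*} (t : Finset ι) (g : ι → E → ℝ)
    (hg : ∀ i ∈ t, ConvexOn ℝ Set.univ (g i)) :
    ConvexOn ℝ Set.univ (fun x => ∑ i ∈ t, g i x) := by
  classical
  induction t using Finset.induction_on with
  | empty => simpa using convexOn_const (0 : ℝ) convex_univ
  | insert _ _ hnot ih =>
    rename_i a s
    simp only [Finset.sum_insert hnot]
    exact (hg a (mem_insert_self a s)).add
      (ih fun i hi => hg i (mem_insert_of_mem hi))

end Aux

/-- DC reformulation for L-estimators of the empirical quantile: with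
`G(x) = ∑_{i=1}^N w_i ∑_{j=i}^N Ĉ_[j](x)` and `H(x) = ∑_{i=1}^{N-1} w_i ∑_{j=i+1}^N Ĉ_[j](x)`
(0-indexed below, the `i = N` term of `H` being an empty sum), `G` and `H` are continuous and
convex, `∑_i w_i Ĉ_[i](x) = G(x) - H(x)`, and the L-estimator constraint is the DC constraint. -/
theorem stmt13 (n N : ℕ) (hN : 0 < N)
    (f : Fin N → EuclideanSpace ℝ (Fin n) → ℝ)
    (hf : ∀ i, ConvexOn ℝ Set.univ (f i))
    (w : Fin N → ℝ) (hw0 : ∀ i, 0 ≤ w i) (hw1 : ∀ i, w i ≤ 1) (hws : (∑ i, w i) = 1)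
    (G H : EuclideanSpace ℝ (Fin n) → ℝ)
    (hGdef : G = fun x => ∑ i : Fin N, w i *
      ∑ j ∈ Finset.univ.filter (fun j : Fin N => i ≤ j), orderStat (fun t => f t x) j)
    (hHdef : H = fun x => ∑ i : Fin N, w i *
      ∑ j ∈ Finset.univ.filter (fun j : Fin N => i < j), orderStat (fun t => f t x) j) :
    Continuous G ∧ ConvexOn ℝ Set.univ G ∧ Continuous H ∧ ConvexOn ℝ Set.univ H ∧
    (∀ x, (∑ i : Fin N, w i * orderStat (fun t => f t x) i) = G x - H x) ∧
    (∀ x, ((∑ i : Fin N, w i * orderStat (fun t => f t x) i) ≤ 0 ↔ G x - H x ≤ 0)) := by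
  classical
  have hGconv : ConvexOn ℝ Set.univ G := by
    rw [hGdef]
    apply aux_convexOn_finset_sum
    intro i _
    have h1 := (aux_topSum_convexOn f hf (i : ℕ) (le_of_lt i.isLt)).smul (hw0 i)
    simp only [smul_eq_mul] at h1
    convert h1 using 2 with x <;> rfl
  have hHconv : ConvexOn ℝ Set.univ H := by
    rw [hHdef]
    apply aux_convexOn_finset_sum
    intro i _
    have h1 := (aux_topSum_convexOn f hf ((i : ℕ) + 1) i.isLt).smul (hw0 i)
    simp only [smul_eq_mul] at h1
    convert h1 using 2 with x <;> rfl
  have hGcont : Continuous G := by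
    rw [← continuousOn_univ]
    simpa using hGconv.continuousOn isOpen_univ
  have hHcont : Continuous H := by
    rw [← continuousOn_univ]
    simpa using hHconv.continuousOn isOpen_univ
  have hkey : ∀ x, (∑ i : Fin N, w i * orderStat (fun t => f t x) i) = G x - H x := by
    intro x
    rw [hGdef, hHdef]
    simp only
    rw [← Finset.sum_sub_distrib]
    apply Finset.sum_congr rfl
    intro i _
    rw [← mul_sub]
    congr 1
    have hins : (Finset.univ.filter (fun j : Fin N => i ≤ j))
        = insert i (Finset.univ.filter (fun j : Fin N => i < j)) := by
      ext j
      simp only [Finset.mem_filter, mem_univ, true_and, Finset.mem_insert]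
      constructor
      · intro h
        rcases eq_or_lt_of_le h with h' | h'
        · left; exact h'.symm
        · right; exact h'
      · rintro (rfl | h)
        · exact le_refl _
        · exact le_of_lt h
    have hnotmem : i ∉ Finset.univ.filter (fun j : Fin N => i < j) := by simp
    rw [hins, Finset.sum_insert hnotmem]
    ring
  exact ⟨hGcont, hGconv, hHcont, hHconv, hkey, fun x => by rw [hkey x]⟩
end

section
/- Let g, h, G, H : ℝ^n → ℝ be convex, let X ⊆ ℝ^n be a nonempty closed convex set, and let β ≥ 0. Let x̄ ∈ X satisfy G(x̄) ≤ H(x̄), and let s_h ∈ ∂h(x̄) and s_H ∈ ∂H(x̄). Assume the Slater condition: there exists x̂ ∈ X with G(x̂) − H(x̄) − ⟨s_H, x̂ − x̄⟩ < 0. If x̄ minimizes u ↦ g(u) − ⟨s_h, u − x̄⟩ + (β/2)‖u − x̄‖² over {u ∈ X : G(u) − H(x̄) − ⟨s_H, u − x̄⟩ ≤ 0}, then there exists λ ≥ 0 such that λ(G(x̄) − H(x̄)) = 0 and there exist s_g ∈ ∂g(x̄), s_G ∈ ∂G(x̄), and v ∈ N_X(x̄) with s_g − s_h + λ(s_G −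 s_H) + v = 0; that is, x̄ is a KKT point of the DC constrained DC program min{g(x) − h(x) : x ∈ X, G(x) − H(x) ≤ 0}. -/
open scoped RealInnerProductSpace

/-- The normal cone of the convex set `X` at `x`. -/
def normalCone {n : ℕ} (X : Set (EuclideanSpace ℝ (Fin n))) (x : EuclideanSpace ℝ (Fin n)) :
    Set (EuclideanSpace ℝ (Fin n)) :=
  {v | ∀ y ∈ X, ⟪v, y - x⟫ ≤ 0}

section Aux

open Set Pointwise

namespace S16

variable {n : ℕ}

/-- difference quotient -/
noncomputable def dq (f : EuclideanSpace ℝ (Fin n) → ℝ) (x z : EuclideanSpace ℝ (Fin n)) (t : ℝ) : ℝ :=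
  (f (x + t • z) - f x) / t

/-- directional derivative -/
noncomputable def dd (f : EuclideanSpace ℝ (Fin n) → ℝ) (x z : EuclideanSpace ℝ (Fin n)) : ℝ :=
  sInf (dq f x z '' Ioi (0:ℝ))

variable {f : EuclideanSpace ℝ (Fin n) → ℝ} {x z : EuclideanSpace ℝ (Fin n)}

lemma dq_mono (hf : ConvexOn ℝ univ f) (x z : EuclideanSpace ℝ (Fin n)) {s t : ℝ}
    (hs : 0 < s) (hst : s ≤ t) : dq f x z s ≤ dq f x z t := by
  have ht : 0 < t := hs.trans_le hst
  have hc : (s/t) • (x + t • z) + (1 - s/t) • x = x + s • z := by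
    match_scalars <;> field_simp <;> ring
  have ha : (0:ℝ) ≤ s/t := by positivity
  have hb : (0:ℝ) ≤ 1 - s/t := by
    have := div_le_one_of_le₀ hst ht.le; linarith
  have hab : s/t + (1 - s/t) = 1 := by ring
  have h1 := hf.2 (mem_univ (x + t • z)) (mem_univ x) ha hb hab
  rw [hc] at h1
  simp only [smul_eq_mul] at h1
  have ht' : t ≠ 0 := ne_of_gt ht
  rw [dq, dq, div_le_div_iff₀ hs ht]
  field_simp at h1
  nlinarith [h1, hs, ht]

lemma dq_lb (hf : ConvexOn ℝ univ f) (x z : EuclideanSpace ℝ (Fin n)) {t : ℝ} (ht : 0 < t) :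
    f x - f (x - z) ≤ dq f x z t := by
  have h1t : (0:ℝ) < 1 + t := by linarith
  have hc : (t/(1+t)) • (x - z) + (1/(1+t)) • (x + t • z) = x := by
    match_scalars <;> field_simp <;> ring
  have ha : (0:ℝ) ≤ t/(1+t) := by positivity
  have hb : (0:ℝ) ≤ 1/(1+t) := by positivity
  have hab : t/(1+t) + 1/(1+t) = 1 := by field_simp <;> ring
  have h1 := hf.2 (mem_univ (x - z)) (mem_univ (x + t • z)) ha hb hab
  rw [hc] at h1
  simp only [smul_eq_mul] at h1
  have h1t' : (1+t) ≠ 0 := ne_of_gt h1t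
  rw [dq, le_div_iff₀ ht]
  field_simp at h1
  nlinarith [h1]

lemma dd_bddBelow (hf : ConvexOn ℝ univ f) (x z : EuclideanSpace ℝ (Fin n)) :
    BddBelow (dq f x z '' Ioi (0:ℝ)) := by
  refine ⟨f x - f (x - z), ?_⟩
  rintro r ⟨t, ht, rfl⟩
  exact dq_lb hf x z ht

lemma dd_le_dq (hf : ConvexOn ℝ univ f) {t : ℝ} (ht : 0 < t) :
    dd f x z ≤ dq f x z t :=
  csInf_le (dd_bddBelow hf x z) ⟨t, ht, rfl⟩

lemma dd_le (hf : ConvexOn ℝ univ f) (x z : EuclideanSpace ℝ (Fin n)) :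
    dd f x z ≤ f (x + z) - f x := by
  have := dd_le_dq (x := x) (z := z) hf one_pos
  simpa [dq] using this

lemma exists_dq_lt (hf : ConvexOn ℝ univ f) (x z : EuclideanSpace ℝ (Fin n)) {ε : ℝ} (hε : 0 < ε) :
    ∃ t : ℝ, 0 < t ∧ dq f x z t < dd f x z + ε := by
  have hne : (dq f x z '' Ioi (0:ℝ)).Nonempty := ⟨dq f x z 1, 1, Set.mem_Ioi.mpr one_pos, rfl⟩
  obtain ⟨r, ⟨t, ht, rfl⟩, hlt⟩ := exists_lt_of_csInf_lt hne (lt_add_of_pos_right _ hε)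
  exact ⟨t, ht, hlt⟩

lemma dd_zero (hf : ConvexOn ℝ univ f) (x : EuclideanSpace ℝ (Fin n)) :
    dd f x 0 = 0 := by
  have : dq f x 0 '' Ioi (0:ℝ) = {0} := by
    ext r
    constructor
    · rintro ⟨t, ht, rfl⟩; simp [dq]
    · rintro rfl; exact ⟨1, Set.mem_Ioi.mpr one_pos, by simp [dq]⟩
  rw [dd, this, csInf_singleton]

lemma dd_smul_le (hf : ConvexOn ℝ univ f) {c : ℝ} (hc : 0 < c) (x z : EuclideanSpace ℝ (Fin n)) :
    dd f x (c • z) ≤ c * dd f x z := by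
  refine le_of_forall_pos_le_add fun ε hε => ?_
  obtain ⟨t, ht, hq⟩ := exists_dq_lt hf x z (ε := ε / c) (by positivity)
  have hq' : dq f x (c • z) (t / c) = c * dq f x z t := by
    rw [dq, dq, smul_smul, div_mul_cancel₀ _ (ne_of_gt hc)]
    field_simp
  calc dd f x (c • z) ≤ dq f x (c • z) (t / c) := dd_le_dq hf (by positivity)
    _ = c * dq f x z t := hq'
    _ ≤ c * (dd f x z + ε / c) := by nlinarith
    _ = c * dd f x z + ε := by rw [mul_add, mul_div_cancel₀ _ (ne_of_gt hc)]

lemma dd_smul (hf : ConvexOn ℝ univ f) {c : ℝ} (hc : 0 < c) (x z : EuclideanSpace ℝ (Fin n)) :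
    dd f x (c • z) = c * dd f x z := by
  refine le_antisymm (dd_smul_le hf hc x z) ?_
  have h := dd_smul_le hf (c := 1/c) (by positivity) x (c • z)
  rw [smul_smul, one_div_mul_cancel (ne_of_gt hc), one_smul] at h
  calc c * dd f x z ≤ c * (1/c * dd f x (c • z)) := by nlinarith
    _ = dd f x (c • z) := by field_simp

lemma dd_add (hf : ConvexOn ℝ univ f) (x z₁ z₂ : EuclideanSpace ℝ (Fin n)) :
    dd f x (z₁ + z₂) ≤ dd f x z₁ + dd f x z₂ := by
  refine le_of_forall_pos_le_add fun ε hε => ?_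
  obtain ⟨t₁, ht₁, hq₁⟩ := exists_dq_lt hf x z₁ (half_pos hε)
  obtain ⟨t₂, ht₂, hq₂⟩ := exists_dq_lt hf x z₂ (half_pos hε)
  set t := min t₁ t₂ / 2 with htdef
  have ht : 0 < t := by positivity
  have h2t₁ : 2 * t ≤ t₁ := by
    have := min_le_left t₁ t₂; rw [htdef]; linarith
  have h2t₂ : 2 * t ≤ t₂ := by
    have := min_le_right t₁ t₂; rw [htdef]; linarith
  have hcomb : f (x + t • (z₁ + z₂)) ≤
      (1/2) * f (x + (2*t) • z₁) + (1/2) * f (x + (2*t) • z₂) := by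
    have hc : (1/2 : ℝ) • (x + (2*t) • z₁) + (1/2 : ℝ) • (x + (2*t) • z₂)
        = x + t • (z₁ + z₂) := by
      match_scalars <;> ring
    have ha : (0:ℝ) ≤ 1/2 := by norm_num
    have hab : (1/2 : ℝ) + 1/2 = 1 := by norm_num
    have h := hf.2 (mem_univ (x + (2*t) • z₁)) (mem_univ (x + (2*t) • z₂)) ha ha hab
    rw [hc] at h
    simpa [smul_eq_mul] using h
  have hkey : dq f x (z₁ + z₂) t ≤ dq f x z₁ (2*t) + dq f x z₂ (2*t) := by
    rw [dq, dq, dq]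
    rw [div_add_div _ _ (by positivity : (2*t:ℝ) ≠ 0) (by positivity : (2*t:ℝ) ≠ 0),
      div_le_div_iff₀ ht (by positivity)]
    nlinarith [hcomb]
  have m₁ : dq f x z₁ (2*t) ≤ dq f x z₁ t₁ := dq_mono hf x z₁ (by positivity) h2t₁
  have m₂ : dq f x z₂ (2*t) ≤ dq f x z₂ t₂ := dq_mono hf x z₂ (by positivity) h2t₂
  have := dd_le_dq (x := x) (z := z₁ + z₂) hf ht
  linarith

lemma dd_smul_le' (hf : ConvexOn ℝ univ f) {c : ℝ} (hc : 0 ≤ c) (x z : EuclideanSpace ℝ (Fin n)) :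
    dd f x (c • z) ≤ c * dd f x z := by
  rcases eq_or_lt_of_le hc with h | h
  · simp [← h, dd_zero hf]
  · exact dd_smul_le hf h x z

lemma dd_convexOn (hf : ConvexOn ℝ univ f) (x : EuclideanSpace ℝ (Fin n)) :
    ConvexOn ℝ univ (dd f x) := by
  refine ⟨convex_univ, fun z₁ _ z₂ _ a b ha hb hab => ?_⟩
  calc dd f x (a • z₁ + b • z₂) ≤ dd f x (a • z₁) + dd f x (b • z₂) := dd_add hf x _ _
    _ ≤ a * dd f x z₁ + b * dd f x z₂ :=
        add_le_add (dd_smul_le' hf ha x z₁) (dd_smul_le' hf hb x z₂)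
    _ = a • dd f x z₁ + b • dd f x z₂ := by simp [smul_eq_mul]

lemma dd_continuous (hf : ConvexOn ℝ univ f) (x : EuclideanSpace ℝ (Fin n)) :
    Continuous (dd f x) := by
  have := (dd_convexOn hf x).continuousOn isOpen_univ
  rwa [continuousOn_univ] at this


/-- attainment: a subgradient achieving the directional derivative in direction `d` -/
lemma exists_subgrad_dd (hf : ConvexOn ℝ univ f) (x d : EuclideanSpace ℝ (Fin n)) :
    ∃ s : EuclideanSpace ℝ (Fin n), s ∈ subdiff f x ∧ ⟪s, d⟫ = dd f x d := by
  have hsub : ∀ c : ℝ, c * dd f x d ≤ dd f x (c • d) := by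
    intro c
    rcases lt_trichotomy c 0 with hc | hc | hc
    · have h0 : dd f x ((c • d) + ((-c) • d)) = 0 := by
        rw [show (c • d) + ((-c) • d) = (0 : EuclideanSpace ℝ (Fin n)) by module, dd_zero hf]
      have h1 := dd_add hf x (c • d) ((-c) • d)
      have h2 : dd f x ((-c) • d) = (-c) * dd f x d := dd_smul hf (by linarith) x d
      rw [h0] at h1
      rw [h2] at h1
      linarith
    · subst hc; simp [dd_zero hf]
    · rw [dd_smul hf hc x d]
  have H : ∀ c : ℝ, c • d = 0 → c • (dd f x d) = 0 := by
    intro c hc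
    rcases smul_eq_zero.mp hc with rfl | rfl
    · simp
    · simp [dd_zero hf]
  set pf := LinearPMap.mkSpanSingleton' (R := ℝ) (σ := RingHom.id ℝ) d (dd f x d) H with hpf
  have hbound : ∀ v : pf.domain, pf v ≤ dd f x v := by
    rintro ⟨v, hv⟩
    have hv' : v ∈ Submodule.span ℝ {d} := by
      rwa [hpf, LinearPMap.domain_mkSpanSingleton] at hv
    obtain ⟨c, rfl⟩ := Submodule.mem_span_singleton.mp hv'
    have happ : pf ⟨c • d, hv⟩ = c • (dd f x d) :=
      LinearPMap.mkSpanSingleton'_apply d (dd f x d) H c _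
    rw [happ, smul_eq_mul]
    exact hsub c
  obtain ⟨ℓ, hagree, hle⟩ := exists_extension_of_le_sublinear pf (dd f x)
    (fun c hc z => dd_smul hf hc x z) (dd_add hf x) hbound
  set s := (InnerProductSpace.toDual ℝ (EuclideanSpace ℝ (Fin n))).symm
    (LinearMap.toContinuousLinearMap ℓ) with hs
  have hinner : ∀ v, ⟪s, v⟫ = ℓ v := by
    intro v
    rw [hs, InnerProductSpace.toDual_symm_apply]
    simp
  refine ⟨s, ?_, ?_⟩
  · intro y
    have h1 : ℓ (y - x) ≤ dd f x (y - x) := hle (y - x)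
    have h2 : dd f x (y - x) ≤ f (x + (y - x)) - f x := dd_le hf x (y - x)
    rw [add_sub_cancel] at h2
    rw [hinner]
    linarith
  · have hdmem : d ∈ pf.domain := by
      rw [hpf, LinearPMap.domain_mkSpanSingleton]
      exact Submodule.mem_span_singleton_self d
    have hd : pf ⟨d, hdmem⟩ = dd f x d :=
      LinearPMap.mkSpanSingleton'_apply_self d (dd f x d) H _
    have h := hagree ⟨d, hdmem⟩
    rw [hinner, h, hd]

/-- subdiff is closed -/
lemma subdiff_isClosed (f : EuclideanSpace ℝ (Fin n) → ℝ) (x : EuclideanSpace ℝ (Fin n)) :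
    IsClosed (subdiff f x) := by
  have : subdiff f x = ⋂ y, {s : EuclideanSpace ℝ (Fin n) | f x + ⟪s, y - x⟫ ≤ f y} := by
    ext s; simp [subdiff, Set.mem_iInter]
  rw [this]
  refine isClosed_iInter fun y => isClosed_le ?_ continuous_const
  exact continuous_const.add ((continuous_id.inner continuous_const))

/-- subdiff is convex -/
lemma subdiff_convex (f : EuclideanSpace ℝ (Fin n) → ℝ) (x : EuclideanSpace ℝ (Fin n)) :
    Convex ℝ (subdiff f x) := by
  intro s₁ h₁ s₂ h₂ a b ha hb hab
  intro y
  have e : ⟪a • s₁ + b • s₂, y - x⟫ = a * ⟪s₁, y - x⟫ + b * ⟪s₂, y - x⟫ := by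
    rw [inner_add_left, real_inner_smul_left, real_inner_smul_left]
  rw [e]
  have hb' : b = 1 - a := by linarith
  subst hb'
  have t1 := mul_le_mul_of_nonneg_left (h₁ y) ha
  have t2 := mul_le_mul_of_nonneg_left (h₂ y) hb
  ring_nf at t1 t2 ⊢
  linarith [t1, t2]

/-- subdiff is compact -/
lemma subdiff_isCompact (hf : ConvexOn ℝ univ f) (x : EuclideanSpace ℝ (Fin n)) :
    IsCompact (subdiff f x) := by
  have hcont : Continuous f := by
    have := hf.continuousOn isOpen_univ
    rwa [continuousOn_univ] at this
  obtain ⟨m, hm, hmax⟩ := (isCompact_closedBall x 1).exists_isMaxOn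
    ⟨x, Metric.mem_closedBall_self zero_le_one⟩ hcont.continuousOn
  have hsub : subdiff f x ⊆ Metric.closedBall 0 (f m - f x) := by
    intro s hs
    rw [Metric.mem_closedBall, dist_zero_right]
    rcases eq_or_ne s 0 with rfl | hs0
    · have : f x ≤ f m := hmax (Metric.mem_closedBall_self zero_le_one)
      simpa using by linarith
    · have hns : (0:ℝ) < ‖s‖ := norm_pos_iff.mpr hs0
      have hu : x + ‖s‖⁻¹ • s ∈ Metric.closedBall x 1 := by
        rw [Metric.mem_closedBall, dist_eq_norm]
        simp only [add_sub_cancel_left]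
        rw [norm_smul, norm_inv, norm_norm, inv_mul_cancel₀ (ne_of_gt hns)]
      have h1 := hs (x + ‖s‖⁻¹ • s)
      rw [add_sub_cancel_left, real_inner_smul_right, real_inner_self_eq_norm_sq] at h1
      have h2 : ‖s‖⁻¹ * ‖s‖^2 = ‖s‖ := by field_simp
      have h3 : f (x + ‖s‖⁻¹ • s) ≤ f m := hmax hu
      rw [h2] at h1
      linarith
  exact (isCompact_closedBall 0 (f m - f x)).of_isClosed_subset (subdiff_isClosed f x) hsub


variable {φ ψ : EuclideanSpace ℝ (Fin n) → ℝ} {X : Set (EuclideanSpace ℝ (Fin n))}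
variable {xb : EuclideanSpace ℝ (Fin n)}

lemma key_ratio (hφ : ConvexOn ℝ univ φ) (hψ : ConvexOn ℝ univ ψ) (hX : Convex ℝ X)
    (hmin : ∀ u ∈ X, ψ u ≤ 0 → φ xb ≤ φ u)
    {u w : EuclideanSpace ℝ (Fin n)} (hu : u ∈ X) (hw : w ∈ X)
    (hψu : ψ u < 0) (hψw : 0 < ψ w) :
    (φ xb - φ w) * (-ψ u) ≤ (φ u - φ xb) * ψ w := by
  have hd : 0 < ψ w - ψ u := by linarith
  set t := -ψ u / (ψ w - ψ u) with htdef
  have ht0 : 0 ≤ t := by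
    apply div_nonneg <;> linarith
  have ht1 : t ≤ 1 := by rw [htdef, div_le_one hd]; linarith
  have htt : t * (ψ w - ψ u) = -ψ u := by rw [htdef]; field_simp
  have h1t : (1 - t) * (ψ w - ψ u) = ψ w := by linear_combination (-1 : ℝ) * htt
  have hzX : t • w + (1 - t) • u ∈ X := hX hw hu ht0 (by linarith) (by ring)
  have hψz : ψ (t • w + (1 - t) • u) ≤ 0 := by
    have h := hψ.2 (mem_univ w) (mem_univ u) ht0 (by linarith : (0:ℝ) ≤ 1 - t) (by ring)
    simp only [smul_eq_mul] at h
    have hz0 : t * ψ w + (1 - t) * ψ u = 0 := by linear_combination htt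
    linarith
  have hφz := hmin _ hzX hψz
  have hφc := hφ.2 (mem_univ w) (mem_univ u) ht0 (by linarith : (0:ℝ) ≤ 1 - t) (by ring)
  simp only [smul_eq_mul] at hφc
  have hcomb : φ xb ≤ t * φ w + (1 - t) * φ u := le_trans hφz hφc
  have hmul := mul_le_mul_of_nonneg_right hcomb hd.le
  have e2 : (t * φ w + (1 - t) * φ u) * (ψ w - ψ u) = (-ψ u) * φ w + ψ w * φ u := by
    linear_combination φ w * htt + φ u * h1t
  rw [e2] at hmul
  nlinarith [hmul]

lemma multiplier (hφ : ConvexOn ℝ univ φ) (hψ : ConvexOn ℝ univ ψ) (hX : Convex ℝ X)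
    (hxb : xb ∈ X) (hψxb : ψ xb ≤ 0)
    {xh : EuclideanSpace ℝ (Fin n)} (hxh : xh ∈ X) (hsl : ψ xh < 0)
    (hmin : ∀ u ∈ X, ψ u ≤ 0 → φ xb ≤ φ u) :
    ∃ lam : ℝ, 0 ≤ lam ∧ lam * ψ xb = 0 ∧ ∀ u ∈ X, φ xb ≤ φ u + lam * ψ u := by
  rcases lt_or_eq_of_le hψxb with hlt | heq
  · -- inactive: lam = 0
    refine ⟨0, le_refl 0, by ring, fun u hu => ?_⟩
    rcases le_or_gt (ψ u) 0 with h | h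
    · have := hmin u hu h; linarith
    · have hk := key_ratio hφ hψ hX hmin hxb hu hlt h
      have : (0:ℝ) < -ψ xb := by linarith
      nlinarith [hk]
  · -- active: ψ xb = 0
    set S := {r : ℝ | ∃ w ∈ X, 0 < ψ w ∧ r = (φ xb - φ w) / ψ w} with hSdef
    have hbdd : BddAbove S := by
      refine ⟨(φ xh - φ xb) / (-ψ xh), ?_⟩
      rintro r ⟨w, hwX, hψw, rfl⟩
      rw [div_le_div_iff₀ hψw (by linarith : (0:ℝ) < -ψ xh)]
      have := key_ratio hφ hψ hX hmin hxh hwX hsl hψw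
      linarith
    set lam := max 0 (sSup S) with hlam
    refine ⟨lam, le_max_left 0 _, by rw [heq, mul_zero], fun u hu => ?_⟩
    rcases lt_trichotomy (ψ u) 0 with h | h | h
    · -- ψ u < 0 : need lam ≤ (φ u - φ xb)/(-ψ u)
      have hR0 : (0:ℝ) ≤ (φ u - φ xb) / (-ψ u) := by
        have hge := hmin u hu h.le
        apply div_nonneg <;> linarith
      have hsup : sSup S ≤ (φ u - φ xb) / (-ψ u) := by
        rcases S.eq_empty_or_nonempty with hSe | hSne
        · rw [hSe, Real.sSup_empty]; exact hR0
        · refine csSup_le hSne ?_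
          rintro r ⟨w, hwX, hψw, rfl⟩
          rw [div_le_div_iff₀ hψw (by linarith : (0:ℝ) < -ψ u)]
          have := key_ratio hφ hψ hX hmin hu hwX h hψw
          linarith
      have hlamle : lam ≤ (φ u - φ xb) / (-ψ u) := max_le hR0 hsup
      rw [le_div_iff₀ (by linarith : (0:ℝ) < -ψ u)] at hlamle
      nlinarith [hlamle]
    · have := hmin u hu h.le
      rw [h]; linarith
    · -- ψ u > 0
      have hrS : (φ xb - φ u) / ψ u ∈ S := ⟨u, hu, h, rfl⟩
      have h1 : (φ xb - φ u) / ψ u ≤ sSup S := le_csSup hbdd hrS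
      have h2 : (φ xb - φ u) / ψ u ≤ lam := le_trans h1 (le_max_right 0 _)
      rw [div_le_iff₀ h] at h2
      linarith

/-- convexity of the proximal quadratic -/
lemma quad_convexOn (β : ℝ) (hβ : 0 ≤ β) (q : EuclideanSpace ℝ (Fin n)) :
    ConvexOn ℝ univ (fun u : EuclideanSpace ℝ (Fin n) => β / 2 * ‖u - q‖ ^ 2) := by
  refine ⟨convex_univ, fun u _ v _ a b ha hb hab => ?_⟩
  simp only [smul_eq_mul]
  have hvec : a • u + b • v - q = a • (u - q) + b • (v - q) := by
    have : a • (u - q) + b • (v - q) = a • u + b • v - (a + b) • q := by module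
    rw [this, hab, one_smul]
  rw [hvec]
  set p := u - q
  set r := v - q
  have hns : ‖a • p + b • r‖ ^ 2 = a^2 * ‖p‖^2 + 2 * (a * b * ⟪p, r⟫) + b^2 * ‖r‖^2 := by
    rw [norm_add_sq_real, norm_smul, norm_smul, real_inner_smul_left, real_inner_smul_right]
    simp [abs_of_nonneg ha, abs_of_nonneg hb]
    ring
  rw [hns]
  have hb' : b = 1 - a := by linarith
  subst hb'
  have hd0 : (0:ℝ) ≤ ‖p‖^2 - 2*⟪p,r⟫ + ‖r‖^2 := by
    have hh := norm_sub_sq_real p r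
    nlinarith [sq_nonneg ‖p - r‖]
  nlinarith [mul_nonneg (mul_nonneg hβ (mul_nonneg ha hb)) hd0]

/-- convexity of a linear shift -/
lemma linshift_convexOn (p q : EuclideanSpace ℝ (Fin n)) :
    ConvexOn ℝ univ (fun u : EuclideanSpace ℝ (Fin n) => ⟪p, u - q⟫) := by
  refine ⟨convex_univ, fun u _ v _ a b ha hb hab => ?_⟩
  simp only [smul_eq_mul]
  have hvec : a • u + b • v - q = a • (u - q) + b • (v - q) := by
    have : a • (u - q) + b • (v - q) = a • u + b • v - (a + b) • q := by module
    rw [this, hab, one_smul]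
  rw [hvec, inner_add_right, real_inner_smul_right, real_inner_smul_right]


/-- bipolar-type lemma -/
lemma mem_closure_cone {X : Set (EuclideanSpace ℝ (Fin n))} {xb : EuclideanSpace ℝ (Fin n)}
    (hXconv : Convex ℝ X) (hxbX : xb ∈ X) (d : EuclideanSpace ℝ (Fin n))
    (hd : ∀ c : EuclideanSpace ℝ (Fin n), (∀ y ∈ X, 0 ≤ ⟪c, y - xb⟫) → 0 ≤ ⟪d, c⟫) :
    d ∈ closure {z : EuclideanSpace ℝ (Fin n) | ∃ t : ℝ, 0 ≤ t ∧ ∃ y ∈ X, z = t • (y - xb)} := by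
  set K := {z : EuclideanSpace ℝ (Fin n) | ∃ t : ℝ, 0 ≤ t ∧ ∃ y ∈ X, z = t • (y - xb)} with hK
  by_contra hnot
  have hKconv : Convex ℝ K := by
    rintro z₁ ⟨t₁, ht₁, y₁, hy₁, rfl⟩ z₂ ⟨t₂, ht₂, y₂, hy₂, rfl⟩ a b ha hb hab
    rcases eq_or_lt_of_le (by positivity : (0:ℝ) ≤ a * t₁ + b * t₂) with hτ | hτ
    · have h1 : a * t₁ = 0 := by nlinarith [mul_nonneg ha ht₁, mul_nonneg hb ht₂]
      have h2 : b * t₂ = 0 := by nlinarith [mul_nonneg ha ht₁, mul_nonneg hb ht₂]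
      have : a • t₁ • (y₁ - xb) + b • t₂ • (y₂ - xb) = (0:EuclideanSpace ℝ (Fin n)) := by
        rw [smul_smul, smul_smul, h1, h2, zero_smul, zero_smul, add_zero]
      rw [this]
      exact ⟨0, le_refl 0, xb, hxbX, by simp⟩
    · set τ := a * t₁ + b * t₂
      refine ⟨τ, hτ.le, (a * t₁ / τ) • y₁ + (b * t₂ / τ) • y₂, ?_, ?_⟩
      · exact hXconv hy₁ hy₂ (by positivity) (by positivity) (by field_simp; rfl)
      · have hτ0 : τ ≠ 0 := ne_of_gt hτ
        match_scalars <;> field_simp <;> ring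
  have h0K : (0 : EuclideanSpace ℝ (Fin n)) ∈ K := ⟨0, le_refl 0, xb, hxbX, by simp⟩
  obtain ⟨fl, u, hlt, hud⟩ :=
    geometric_hahn_banach_closed_point (hKconv.closure) isClosed_closure hnot
  have hu0 : 0 < u := by
    have := hlt 0 (subset_closure h0K)
    simpa using this
  have hKle : ∀ z ∈ K, fl z ≤ 0 := by
    rintro z hz
    by_contra hpos
    push_neg at hpos
    have hsm : ((u + 1) / fl z) • z ∈ K := by
      obtain ⟨t, ht, y, hy, rfl⟩ := hz
      exact ⟨(u + 1) / fl (t • (y - xb)) * t, by positivity, y, hy, by rw [smul_smul]⟩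
    have := hlt _ (subset_closure hsm)
    rw [map_smul, smul_eq_mul, div_mul_cancel₀ _ (ne_of_gt hpos)] at this
    linarith
  set e := (InnerProductSpace.toDual ℝ (EuclideanSpace ℝ (Fin n))).symm fl with he
  have hee : ∀ z, ⟪e, z⟫ = fl z := fun z => InnerProductSpace.toDual_symm_apply
  have hC : ∀ y ∈ X, 0 ≤ ⟪-e, y - xb⟫ := by
    intro y hy
    have h1 : fl (y - xb) ≤ 0 := hKle _ ⟨1, zero_le_one, y, hy, (one_smul _ _).symm⟩
    rw [inner_neg_left, hee]
    linarith
  have h2 := hd (-e) hC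
  rw [real_inner_comm, inner_neg_left, hee] at h2
  linarith


end S16

end Aux

set_option maxHeartbeats 1000000

open Set Pointwise S16

/-- fixed points of the proximal DC iteration are KKT points: if `x̄` is
feasible, the Slater condition holds for the linearized subproblem at `x̄`, and `x̄` minimizes
its own linearized proximal subproblem, then `x̄` is a KKT point of
`min{g - h : x ∈ X, G - H ≤ 0}`. -/
theorem stmt16 (n : ℕ) (g h G H : EuclideanSpace ℝ (Fin n) → ℝ)
    (hg : ConvexOn ℝ Set.univ g) (hh : ConvexOn ℝ Set.univ h)
    (hG : ConvexOn ℝ Set.univ G) (hH : ConvexOn ℝ Set.univ H)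
    (X : Set (EuclideanSpace ℝ (Fin n))) (hXne : X.Nonempty) (hXcl : IsClosed X)
    (hXconv : Convex ℝ X) (β : ℝ) (hβ : 0 ≤ β)
    (xb : EuclideanSpace ℝ (Fin n)) (hxbX : xb ∈ X) (hfeas : G xb ≤ H xb)
    (sh sH : EuclideanSpace ℝ (Fin n))
    (hsh : sh ∈ subdiff h xb) (hsH : sH ∈ subdiff H xb)
    (hslater : ∃ xhat ∈ X, G xhat - H xb - ⟪sH, xhat - xb⟫ < 0)
    (hmin : ∀ u ∈ X, G u - H xb - ⟪sH, u - xb⟫ ≤ 0 →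
      g xb ≤ g u - ⟪sh, u - xb⟫ + β / 2 * ‖u - xb‖ ^ 2) :
    ∃ lam : ℝ, 0 ≤ lam ∧ lam * (G xb - H xb) = 0 ∧
      ∃ sg ∈ subdiff g xb, ∃ sG ∈ subdiff G xb, ∃ v ∈ normalCone X xb,
        sg - sh + lam • (sG - sH) + v = 0 := by
  classical
  obtain ⟨xh, hxhX, hxhsl⟩ := hslater
  set ψ : EuclideanSpace ℝ (Fin n) → ℝ := fun u => G u - H xb - ⟪sH, u - xb⟫ with hψdef
  set φ : EuclideanSpace ℝ (Fin n) → ℝ :=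
    fun u => g u - ⟪sh, u - xb⟫ + β / 2 * ‖u - xb‖ ^ 2 with hφdef
  have hψconv : ConvexOn ℝ univ ψ := by
    have h1 := (hG.add (linshift_convexOn (-sH) xb)).add (convexOn_const (-H xb) convex_univ)
    have : ψ = fun u => (G u + ⟪-sH, u - xb⟫) + (-H xb) := by
      funext u; simp [hψdef, inner_neg_left]; ring
    rw [this]; exact h1
  have hφconv : ConvexOn ℝ univ φ := by
    have h1 := (hg.add (linshift_convexOn (-sh) xb)).add (quad_convexOn β hβ xb)
    have : φ = fun u => (g u + ⟪-sh, u - xb⟫) + β / 2 * ‖u - xb‖ ^ 2 := by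
      funext u; simp [hφdef, inner_neg_left]; ring
    rw [this]; exact h1
  have hψxb : ψ xb = G xb - H xb := by simp [hψdef]
  have hφxb : φ xb = g xb := by simp [hφdef]
  have hφmin : ∀ u ∈ X, ψ u ≤ 0 → φ xb ≤ φ u := by
    intro u hu hψu
    rw [hφxb]
    have := hmin u hu hψu
    simp only [hφdef]
    linarith
  obtain ⟨lam, hlam0, hlamψ, hlammin⟩ := multiplier hφconv hψconv hXconv hxbX
    (by rw [hψxb]; linarith) hxhX hxhsl hφmin
  have hcompl : lam * (G xb - H xb) = 0 := by rw [← hψxb]; exact hlamψ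
  set w : EuclideanSpace ℝ (Fin n) := -(sh + lam • sH) with hwdef
  have hwin : ∀ z : EuclideanSpace ℝ (Fin n), ⟪w, z⟫ = -⟪sh, z⟫ - lam * ⟪sH, z⟫ := by
    intro z
    rw [hwdef, inner_neg_left, inner_add_left, real_inner_smul_left]
    ring
  -- minimality of the full Lagrangian-type function over X
  have hΦmin : ∀ u ∈ X, g xb + lam * G xb ≤
      g u + lam * G u + ⟪w, u - xb⟫ + β / 2 * ‖u - xb‖ ^ 2 := by
    intro u hu
    have h1 := hlammin u hu
    rw [hφxb] at h1
    simp only [hφdef, hψdef] at h1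
    rw [hwin]
    nlinarith [hcompl, h1]
  -- the sublinear support function
  set σ : EuclideanSpace ℝ (Fin n) → ℝ :=
    fun z => dd g xb z + lam * dd G xb z + ⟪w, z⟫ with hσdef
  have hσK : ∀ y ∈ X, 0 ≤ σ (y - xb) := by
    intro y hy
    set z := y - xb with hz
    have hkey : ∀ ε : ℝ, 0 < ε → 0 ≤ σ z + ε * (1 + lam + β / 2 * ‖z‖ ^ 2) := by
      intro ε hε
      obtain ⟨t₁, ht₁, hq₁⟩ := exists_dq_lt hg xb z hε
      obtain ⟨t₂, ht₂, hq₂⟩ := exists_dq_lt hG xb z hε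
      set t := min (min t₁ t₂) (min 1 ε) with ht
      have ht0 : 0 < t := by positivity
      have htt₁ : t ≤ t₁ := le_trans (min_le_left _ _) (min_le_left _ _)
      have htt₂ : t ≤ t₂ := le_trans (min_le_left _ _) (min_le_right _ _)
      have ht1 : t ≤ 1 := le_trans (min_le_right _ _) (min_le_left _ _)
      have htε : t ≤ ε := le_trans (min_le_right _ _) (min_le_right _ _)
      have huX : xb + t • z ∈ X := by
        have : xb + t • z = (1 - t) • xb + t • y := by rw [hz]; module
        rw [this]
        exact hXconv hxbX hy (by linarith) ht0.le (by ring)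
      have h1 := hΦmin _ huX
      rw [add_sub_cancel_left, real_inner_smul_right] at h1
      have hnz : ‖t • z‖ ^ 2 = t ^ 2 * ‖z‖ ^ 2 := by
        rw [norm_smul, mul_pow, Real.norm_eq_abs, sq_abs]
      rw [hnz] at h1
      have hgq : g (xb + t • z) - g xb = dq g xb z t * t := by
        rw [dq, div_mul_cancel₀ _ (ne_of_gt ht0)]
      have hGq : G (xb + t • z) - G xb = dq G xb z t * t := by
        rw [dq, div_mul_cancel₀ _ (ne_of_gt ht0)]
      have h2 : 0 ≤ dq g xb z t * t + lam * (dq G xb z t * t) + t * ⟪w, z⟫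
          + β / 2 * (t ^ 2 * ‖z‖ ^ 2) := by
        have hGq' : lam * (G (xb + t • z) - G xb) = lam * (dq G xb z t * t) :=
          congrArg (fun r => lam * r) hGq
        linarith [h1, hgq, hGq']
      have h3 : 0 ≤ dq g xb z t + lam * dq G xb z t + ⟪w, z⟫ + β / 2 * (t * ‖z‖ ^ 2) := by
        have hfac : dq g xb z t * t + lam * (dq G xb z t * t) + t * ⟪w, z⟫
            + β / 2 * (t ^ 2 * ‖z‖ ^ 2)
            = t * (dq g xb z t + lam * dq G xb z t + ⟪w, z⟫ + β / 2 * (t * ‖z‖ ^ 2)) := by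
          ring
        rw [hfac] at h2
        exact nonneg_of_mul_nonneg_right h2 ht0
      have m₁ : dq g xb z t ≤ dq g xb z t₁ := dq_mono hg xb z ht0 htt₁
      have m₂ : dq G xb z t ≤ dq G xb z t₂ := dq_mono hG xb z ht0 htt₂
      have hβt : β / 2 * (t * ‖z‖ ^ 2) ≤ β / 2 * (ε * ‖z‖ ^ 2) := by
        nlinarith [mul_nonneg (mul_nonneg hβ (sub_nonneg.mpr htε)) (sq_nonneg ‖z‖)]
      have hσz : σ z = dd g xb z + lam * dd G xb z + ⟪w, z⟫ := rfl
      have e1 : lam * dq G xb z t₂ ≤ lam * (dd G xb z + ε) :=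
        mul_le_mul_of_nonneg_left (le_of_lt hq₂) hlam0
      have e2 : lam * dq G xb z t ≤ lam * dq G xb z t₂ := mul_le_mul_of_nonneg_left m₂ hlam0
      rw [hσz]
      linarith [h3, m₁, hq₁, e1, e2, hβt]
    by_contra hneg
    push_neg at hneg
    have hq0 : (0:ℝ) ≤ β / 2 * ‖z‖ ^ 2 := by positivity
    have hD0 : (0:ℝ) < 1 + lam + β / 2 * ‖z‖ ^ 2 := by linarith
    have hk := hkey (-σ z / (2 * (1 + lam + β / 2 * ‖z‖ ^ 2)))
      (div_pos (by linarith : (0:ℝ) < -σ z)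
        (by linarith : (0:ℝ) < 2 * (1 + lam + β / 2 * ‖z‖ ^ 2)))
    set D := 1 + lam + β / 2 * ‖z‖ ^ 2 with hD
    have hDne : D ≠ 0 := ne_of_gt hD0
    have he : -σ z / (2 * D) * D = -σ z / 2 := by field_simp
    rw [he] at hk
    generalize hSz : σ z = Sz at hk hneg
    linarith
  set K := {z : EuclideanSpace ℝ (Fin n) | ∃ t : ℝ, 0 ≤ t ∧ ∃ y ∈ X, z = t • (y - xb)} with hK
  have hσcont : Continuous σ := by
    have c1 := dd_continuous hg xb
    have c2 := dd_continuous hG xb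
    have c3 : Continuous fun z : EuclideanSpace ℝ (Fin n) => ⟪w, z⟫ :=
      Continuous.inner continuous_const continuous_id
    rw [hσdef]
    exact (c1.add (continuous_const.mul c2)).add c3
  have hσcone : ∀ z ∈ K, 0 ≤ σ z := by
    rintro z ⟨t, ht, y, hy, rfl⟩
    rcases eq_or_lt_of_le ht with h0 | h0
    · have hσ0 : σ (0 : EuclideanSpace ℝ (Fin n)) = 0 := by
        show dd g xb 0 + lam * dd G xb 0 + ⟪w, (0 : EuclideanSpace ℝ (Fin n))⟫ = 0
        rw [dd_zero hg, dd_zero hG, inner_zero_right]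
        ring
      rw [← h0, zero_smul, hσ0]
    · have hσsmul : σ (t • (y - xb)) = t * σ (y - xb) := by
        show dd g xb (t • (y - xb)) + lam * dd G xb (t • (y - xb)) + ⟪w, t • (y - xb)⟫
          = t * (dd g xb (y - xb) + lam * dd G xb (y - xb) + ⟪w, y - xb⟫)
        rw [dd_smul hg h0, dd_smul hG h0, real_inner_smul_right]
        ring
      rw [hσsmul]
      exact mul_nonneg h0.le (hσK y hy)
  have hσclos : ∀ z ∈ closure K, 0 ≤ σ z := by
    have hsub : closure K ⊆ {z | 0 ≤ σ z} :=
      closure_minimal hσcone (isClosed_le continuous_const hσcont)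
    exact hsub
  -- the two sets to be separated
  set B : Set (EuclideanSpace ℝ (Fin n)) :=
    subdiff g xb + lam • subdiff G xb + {w} with hB
  set C : Set (EuclideanSpace ℝ (Fin n)) :=
    {c | ∀ y ∈ X, 0 ≤ ⟪c, y - xb⟫} with hC
  have hBC : (B ∩ C).Nonempty := by
    by_contra hem
    rw [Set.not_nonempty_iff_eq_empty] at hem
    have hdisj : Disjoint B C := Set.disjoint_iff_inter_eq_empty.mpr hem
    have hBconv : Convex ℝ B :=
      ((subdiff_convex g xb).add ((subdiff_convex G xb).smul lam)).add (convex_singleton w)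
    have hBcomp : IsCompact B :=
      (((subdiff_isCompact hg xb).add ((subdiff_isCompact hG xb).smul lam)).add
        isCompact_singleton)
    have hCconv : Convex ℝ C := by
      intro c₁ h₁ c₂ h₂ a b ha hb hab
      intro y hy
      have e : ⟪a • c₁ + b • c₂, y - xb⟫ = a * ⟪c₁, y - xb⟫ + b * ⟪c₂, y - xb⟫ := by
        rw [inner_add_left, real_inner_smul_left, real_inner_smul_left]
      rw [Set.mem_setOf_eq] at h₁ h₂
      rw [e]
      have := h₁ y hy
      have := h₂ y hy
      positivity
    have hCclosed : IsClosed C := by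
      have : C = ⋂ y ∈ X, {c : EuclideanSpace ℝ (Fin n) | 0 ≤ ⟪c, y - xb⟫} := by
        ext c; simp [hC]
      rw [this]
      exact isClosed_biInter fun y _ =>
        isClosed_le continuous_const (continuous_id.inner continuous_const)
    obtain ⟨fl, u, v, hfB, huv, hfC⟩ :=
      geometric_hahn_banach_compact_closed hBconv hBcomp hCconv hCclosed hdisj
    have h0C : (0 : EuclideanSpace ℝ (Fin n)) ∈ C := by
      intro y hy; simp
    have hv0 : v < 0 := by
      have := hfC 0 h0C
      simpa using this
    have hCpos : ∀ c ∈ C, 0 ≤ fl c := by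
      intro c hc
      by_contra hneg
      push_neg at hneg
      have hsm : ((v - 1) / fl c) • c ∈ C := by
        intro y hy
        rw [real_inner_smul_left]
        have := hc y hy
        have hq : 0 ≤ (v - 1) / fl c := by
          rw [div_nonneg_iff]; right; exact ⟨by linarith, hneg.le⟩
        positivity
      have := hfC _ hsm
      rw [map_smul, smul_eq_mul, div_mul_cancel₀ _ (ne_of_lt hneg)] at this
      linarith
    set d := (InnerProductSpace.toDual ℝ (EuclideanSpace ℝ (Fin n))).symm fl with hd
    have hdi : ∀ z, ⟪d, z⟫ = fl z := fun z => InnerProductSpace.toDual_symm_apply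
    have hdK : d ∈ closure K := by
      apply mem_closure_cone hXconv hxbX
      intro c hcC
      rw [hdi]
      exact hCpos c hcC
    have hσd : 0 ≤ σ d := hσclos d hdK
    obtain ⟨sg, hsg, hsgd⟩ := exists_subgrad_dd hg xb d
    obtain ⟨sG1, hsG1, hsG1d⟩ := exists_subgrad_dd hG xb d
    have hbB : sg + lam • sG1 + w ∈ B :=
      Set.add_mem_add (Set.add_mem_add hsg (Set.smul_mem_smul_set hsG1)) rfl
    have hfb := hfB _ hbB
    have hfbeq : fl (sg + lam • sG1 + w) = σ d := by
      have hσd2 : σ d = dd g xb d + lam * dd G xb d + ⟪w, d⟫ := rfl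
      rw [← hdi, inner_add_right, inner_add_right, real_inner_smul_right, hσd2,
        real_inner_comm sg d, real_inner_comm sG1 d, real_inner_comm w d, hsgd, hsG1d]
    rw [hfbeq] at hfb
    linarith
  obtain ⟨b, hbB, hbC⟩ := hBC
  rw [hB] at hbB
  obtain ⟨p, hp, wb, hwb, rfl⟩ := Set.mem_add.mp hbB
  obtain ⟨sg, hsg, q, hq, rfl⟩ := Set.mem_add.mp hp
  obtain ⟨sG1, hsG1, rfl⟩ := Set.mem_smul_set.mp hq
  rw [Set.mem_singleton_iff] at hwb
  subst hwb
  refine ⟨lam, hlam0, hcompl, sg, hsg, sG1, hsG1, -(sg + lam • sG1 + w), ?_, ?_⟩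
  · intro y hy
    rw [inner_neg_left, neg_nonpos]
    exact hbC y hy
  · rw [hwdef]
    module
end
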